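/- arXiv:1109.1602 — 2 statements merged into one kernel-verified Lean document; each statement's English description precedes it below -/
import Mathlib

section
/- Let G be a graph on n vertices with no induced 4-cycle and no clique of size k. Then the treewidth of the complement of G is at least n - k. -/
open SimpleGraph

/-- A tree decomposition of a graph `G`. -/
structure TreeDecomp {V : Type} (G : SimpleGraph V) where
  ι : Type
  T : SimpleGraph ι
  conn : T.Connected
  acyclic : T.IsAcyclic
  bag : ι → Finset V
  cover : ∀ v : V, ∃ i, v ∈ bag i
  edge_cover : ∀ ⦃u v : V⦄, G.Adj u v → ∃ i, u ∈ bag i ∧ v ∈ bag i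
  bag_conn : ∀ v : V, (T.induce {i | v ∈ bag i}).Connected

/-- The treewidth of `G`: minimum over tree decompositions of max bag size minus one. -/
noncomputable def treewidth {V : Type} (G : SimpleGraph V) : ℕ :=
  sInf {k | ∃ D : TreeDecomp G, ∀ i, (D.bag i).card ≤ k + 1}

/-- `G` is a `k`-tree: there is a construction ordering starting from a `(k+1)`-clique,
each later vertex being adjacent exactly to a `k`-clique of earlier vertices. -/
def IsKTree {V : Type} (k : ℕ) (G : SimpleGraph V) : Prop :=
  ∃ (n : ℕ) (e : V ≃ Fin n), k + 1 ≤ n ∧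
    (∀ i j : Fin n, i < j → (j : ℕ) < k + 1 → G.Adj (e.symm i) (e.symm j)) ∧
    ∀ j : Fin n, k + 1 ≤ (j : ℕ) →
      ∃ C : Finset V, G.IsNClique k C ∧ (∀ x ∈ C, ((e x : ℕ) < (j : ℕ))) ∧
        ∀ i : Fin n, i < j → (G.Adj (e.symm i) (e.symm j) ↔ e.symm i ∈ C)

/-- `G` has four vertices inducing a 4-cycle. -/
def HasInducedC4 {V : Type} (G : SimpleGraph V) : Prop :=
  ∃ a b c d : V, a ≠ c ∧ b ≠ d ∧
    G.Adj a b ∧ G.Adj b c ∧ G.Adj c d ∧ G.Adj d a ∧ ¬ G.Adj a c ∧ ¬ G.Adj b d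

/-- Two vertex sets touch in `G`: they intersect or an edge of `G` joins them. -/
def Touch {V : Type} (G : SimpleGraph V) (A B : Set V) : Prop :=
  (A ∩ B).Nonempty ∨ ∃ a ∈ A, ∃ b ∈ B, G.Adj a b

/-- A bramble in `G`: a family of connected, pairwise touching vertex sets. -/
def IsBramble {V : Type} (G : SimpleGraph V) (𝓑 : Set (Set V)) : Prop :=
  (∀ A ∈ 𝓑, (G.induce A).Connected) ∧ ∀ A ∈ 𝓑, ∀ B ∈ 𝓑, Touch G A B

/-- `S` is a hitting set of the bramble `𝓑`. -/
def IsHittingSet {V : Type} (𝓑 : Set (Set V)) (S : Set V) : Prop :=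
  ∀ A ∈ 𝓑, (A ∩ S).Nonempty

/-- The split graph `Q_n^k`: a `k`-clique (the vertices `< k`) with `n - k` further
vertices adjacent exactly to the clique. -/
def QGraph (n k : ℕ) : SimpleGraph (Fin n) where
  Adj i j := i ≠ j ∧ ((i : ℕ) < k ∨ (j : ℕ) < k)
  symm := ⟨by intro i j h; exact ⟨h.1.symm, h.2.symm⟩⟩
  loopless := ⟨by intro i h; exact h.1 rfl⟩



namespace TwHelly

variable {ι : Type} {T : SimpleGraph ι}

/-- A set of vertices is path-closed: the support of any path between two of its
members stays inside the set. -/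
def PClosed (T : SimpleGraph ι) (S : Set ι) : Prop :=
  ∀ ⦃x y : ι⦄, x ∈ S → y ∈ S → ∀ p : T.Walk x y, p.IsPath → ∀ z ∈ p.support, z ∈ S

lemma walk_unique (hT : T.IsAcyclic) {a b : ι} {p q : T.Walk a b}
    (hp : p.IsPath) (hq : q.IsPath) : p = q :=
  congrArg Subtype.val (hT.path_unique ⟨p, hp⟩ ⟨q, hq⟩)

lemma pClosed_inter {A B : Set ι} (hA : PClosed T A) (hB : PClosed T B) :
    PClosed T (A ∩ B) := fun _x _y hx hy p hp z hz =>
  ⟨hA hx.1 hy.1 p hp z hz, hB hx.2 hy.2 p hp z hz⟩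

lemma exists_first {Q : Set ι} : ∀ {a b : ι} (p : T.Walk a b), p.IsPath → b ∈ Q →
    ∃ m, m ∈ Q ∧ ∃ w : T.Walk a m, w.IsPath ∧ (∀ z ∈ w.support, z ∈ p.support) ∧
      (∀ z ∈ w.support, z ∈ Q → z = m) := by
  intro a b p
  induction p with
  | nil =>
    intro _ hb
    exact ⟨_, hb, Walk.nil, by simp, by simp, by simp⟩
  | @cons u v b h p ih =>
    intro hp hb
    by_cases huQ : u ∈ Q
    · refine ⟨u, huQ, Walk.nil, by simp, by simp, by simp⟩
    · obtain ⟨m, hm, w, hw, hsub, honly⟩ := ih ((Walk.cons_isPath_iff h p).1 hp).1 hb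
      refine ⟨m, hm, Walk.cons h w, ?_, ?_, ?_⟩
      · refine (Walk.cons_isPath_iff h w).2 ⟨hw, fun hu => ?_⟩
        exact ((Walk.cons_isPath_iff h p).1 hp).2 (hsub _ hu)
      · intro z hz
        rw [Walk.support_cons] at hz ⊢
        rcases List.mem_cons.1 hz with rfl | hz
        · exact List.mem_cons_self
        · exact List.mem_cons_of_mem _ (hsub _ hz)
      · intro z hz hzQ
        rw [Walk.support_cons] at hz
        rcases List.mem_cons.1 hz with rfl | hz
        · exact absurd hzQ huQ
        · exact honly _ hz hzQ

lemma median (hT : T.IsAcyclic) {a b c : ι} (p : T.Walk a b) (q : T.Walk b c)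
    (r : T.Walk a c) (hp : p.IsPath) (hq : q.IsPath) (hr : r.IsPath) :
    ∃ m, m ∈ p.support ∧ m ∈ q.support ∧ m ∈ r.support := by
  classical
  obtain ⟨m, hmQ, w, hw, hsub, honly⟩ :=
    exists_first (Q := {z | z ∈ q.support}) p hp q.start_mem_support
  have hmq : m ∈ q.support := hmQ
  set q2 := q.dropUntil m hmq with hq2def
  have hq2 : q2.IsPath := hq.dropUntil hmq
  have hq2sub : q2.support ⊆ q.support := q.support_dropUntil_subset hmq
  have hmtail : m ∉ q2.support.tail := by
    have := (Walk.isPath_def _).1 hq2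
    rw [q2.support_eq_cons] at this
    exact (List.nodup_cons.1 this).1
  have happ : (w.append q2).IsPath := by
    rw [Walk.isPath_def, Walk.support_append, List.nodup_append]
    refine ⟨(Walk.isPath_def _).1 hw, ?_, ?_⟩
    · have := (Walk.isPath_def _).1 hq2
      rw [q2.support_eq_cons] at this
      exact (List.nodup_cons.1 this).2
    · intro z hzw z' hzt hzz
      subst hzz
      have hzq : z ∈ q.support := hq2sub (List.mem_of_mem_tail hzt)
      have := honly _ hzw hzq
      subst this
      exact hmtail hzt
  have hreq : w.append q2 = r := walk_unique hT happ hr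
  refine ⟨m, hsub _ w.end_mem_support, hmq, ?_⟩
  rw [← hreq, Walk.mem_support_append_iff]
  exact Or.inl w.end_mem_support

lemma pClosed_of_induce_connected (hT : T.IsAcyclic) {S : Set ι}
    (hS : (T.induce S).Connected) : PClosed T S := by
  classical
  intro x y hx hy p hp z hz
  obtain ⟨W⟩ := hS.preconnected ⟨x, hx⟩ ⟨y, hy⟩
  let W' : T.Walk x y := W.map (SimpleGraph.Embedding.induce S).toHom
  have hsup : ∀ z ∈ W'.support, z ∈ S := by
    intro z hz
    rw [show W'.support = W.support.map _ from Walk.support_map _ _] at hz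
    obtain ⟨t, _, rfl⟩ := List.mem_map.1 hz
    exact t.2
  have : p = W'.bypass := walk_unique hT hp W'.bypass_isPath
  rw [this] at hz
  exact hsup _ (W'.support_bypass_subset hz)

lemma pClosed_union (hT : T.IsAcyclic) (hc : T.Connected) {A B : Set ι} {z : ι}
    (hA : PClosed T A) (hB : PClosed T B) (hzA : z ∈ A) (hzB : z ∈ B) :
    PClosed T (A ∪ B) := by
  classical
  have key : ∀ ⦃x y : ι⦄, x ∈ A → y ∈ B → ∀ p : T.Walk x y, p.IsPath →
      ∀ z' ∈ p.support, z' ∈ A ∪ B := by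
    intro x y hx hy p hp z' hz'
    obtain ⟨W1⟩ := hc.preconnected x z
    obtain ⟨W2⟩ := hc.preconnected z y
    have h1 : ∀ t ∈ W1.bypass.support, t ∈ A := hA hx hzA _ W1.bypass_isPath
    have h2 : ∀ t ∈ W2.bypass.support, t ∈ B := hB hzB hy _ W2.bypass_isPath
    have : p = (W1.bypass.append W2.bypass).bypass :=
      walk_unique hT hp (Walk.bypass_isPath _)
    rw [this] at hz'
    have := (W1.bypass.append W2.bypass).support_bypass_subset hz'
    rcases (Walk.mem_support_append_iff _ _).1 this with h | h
    · exact Or.inl (h1 _ h)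
    · exact Or.inr (h2 _ h)
  intro x y hx hy p hp z' hz'
  rcases hx with hx | hx <;> rcases hy with hy | hy
  · exact Or.inl (hA hx hy p hp _ hz')
  · exact key hx hy p hp _ hz'
  · have : z' ∈ p.reverse.support := by rwa [Walk.support_reverse, List.mem_reverse]
    exact key hy hx p.reverse ((Walk.isPath_reverse_iff p).2 hp) _ this
  · exact Or.inr (hB hx hy p hp _ hz')

lemma helly3 (hT : T.IsAcyclic) (hc : T.Connected) {A B C : Set ι}
    (hA : PClosed T A) (hB : PClosed T B) (hC : PClosed T C)
    (hAB : (A ∩ B).Nonempty) (hAC : (A ∩ C).Nonempty) (hBC : (B ∩ C).Nonempty) :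
    (A ∩ B ∩ C).Nonempty := by
  classical
  obtain ⟨a, haA, haB⟩ := hAB
  obtain ⟨b, hbA, hbC⟩ := hAC
  obtain ⟨c, hcB, hcC⟩ := hBC
  obtain ⟨wp⟩ := hc.preconnected a b
  obtain ⟨wq⟩ := hc.preconnected b c
  obtain ⟨wr⟩ := hc.preconnected a c
  obtain ⟨m, hmp, hmq, hmr⟩ := median hT wp.bypass wq.bypass wr.bypass
    wp.bypass_isPath wq.bypass_isPath wr.bypass_isPath
  exact ⟨m, ⟨hA haA hbA _ wp.bypass_isPath _ hmp, hB haB hcB _ wr.bypass_isPath _ hmr⟩,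
    hC hbC hcC _ wq.bypass_isPath _ hmq⟩

lemma helly_list (hT : T.IsAcyclic) (hc : T.Connected) :
    ∀ (l : List (Set ι)) (C : Set ι), PClosed T C → C.Nonempty →
    (∀ S ∈ l, PClosed T S) → (∀ S ∈ l, (C ∩ S).Nonempty) →
    (∀ S ∈ l, ∀ S' ∈ l, (S ∩ S').Nonempty) →
    ∃ m, m ∈ C ∧ ∀ S ∈ l, m ∈ S := by
  intro l
  induction l with
  | nil =>
    intro C _ hCne _ _ _
    obtain ⟨m, hm⟩ := hCne
    exact ⟨m, hm, by simp⟩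
  | cons S l ih =>
    intro C hC hCne hcl hint hpair
    have hS : PClosed T S := hcl S (List.mem_cons_self)
    have h1 : (C ∩ S).Nonempty := hint S (List.mem_cons_self)
    obtain ⟨m, ⟨hmC, hmS⟩, hml⟩ := ih (C ∩ S) (pClosed_inter hC hS) h1
      (fun S' hS' => hcl S' (List.mem_cons_of_mem _ hS'))
      (fun S' hS' => helly3 hT hc hC hS (hcl S' (List.mem_cons_of_mem _ hS')) h1
        (hint S' (List.mem_cons_of_mem _ hS'))
        (hpair S (List.mem_cons_self) S' (List.mem_cons_of_mem _ hS')))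
      (fun S1 h1' S2 h2' => hpair S1 (List.mem_cons_of_mem _ h1') S2 (List.mem_cons_of_mem _ h2'))
    refine ⟨m, hmC, fun S' hS' => ?_⟩
    rcases List.mem_cons.1 hS' with rfl | hS'
    · exact hmS
    · exact hml _ hS'

end TwHelly

open TwHelly in
theorem tw_compl_of_no_inducedC4_of_cliqueFree {V : Type} [Fintype V] (G : SimpleGraph V)
    (k : ℕ) (h4 : ¬ HasInducedC4 G) (hk : G.CliqueFree k) :
    Fintype.card V - k ≤ treewidth Gᶜ := by
  classical
  -- the defining set of `treewidth` is nonempty: trivial one-bag decomposition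
  have hconU : ∀ (S : Set Unit), S.Nonempty → ((⊥ : SimpleGraph Unit).induce S).Connected := by
    intro S hS
    obtain ⟨x, hx⟩ := hS
    refine (connected_iff _).2 ⟨fun u v => ?_, ⟨⟨x, hx⟩⟩⟩
    have : u = v := Subsingleton.elim u v
    exact this ▸ Reachable.refl u
  have hne : {w | ∃ D : TreeDecomp Gᶜ, ∀ i, (D.bag i).card ≤ w + 1}.Nonempty := by
    refine ⟨Fintype.card V - 1,
      ⟨{ ι := Unit, T := ⊥,
         conn := (connected_iff _).2
           ⟨fun u v => (Subsingleton.elim u v) ▸ Reachable.refl u, ⟨()⟩⟩,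
         acyclic := SimpleGraph.isAcyclic_bot,
         bag := fun _ => Finset.univ,
         cover := fun v => ⟨(), Finset.mem_univ v⟩,
         edge_cover := fun u v _ => ⟨(), Finset.mem_univ u, Finset.mem_univ v⟩,
         bag_conn := fun v => hconU _ ⟨(), Finset.mem_univ v⟩ }, fun _ => ?_⟩⟩
    simp only [Finset.card_univ]
    omega
  refine le_csInf hne ?_
  rintro w ⟨D, hD⟩
  by_cases hE : ∃ u v : V, Gᶜ.Adj u v
  · obtain ⟨u0, v0, he0⟩ := hE
    have hTa := D.acyclic
    have hTc := D.conn
    set I : V → Set D.ι := fun v => {i | v ∈ D.bag i} with hIdef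
    have hIcl : ∀ v, PClosed D.T (I v) := fun v =>
      pClosed_of_induce_connected hTa (D.bag_conn v)
    have hIne : ∀ v, (I v).Nonempty := fun v => D.cover v
    set PS : V × V → Set D.ι := fun p => I p.1 ∪ I p.2 with hPSdef
    have hPScl : ∀ p : V × V, Gᶜ.Adj p.1 p.2 → PClosed D.T (PS p) := by
      rintro ⟨u, v⟩ h
      obtain ⟨i, hiu, hiv⟩ := D.edge_cover h
      exact pClosed_union hTa hTc (hIcl u) (hIcl v) hiu hiv
    -- pairwise intersection, using C4-freeness
    have hadj : ∀ ⦃a b : V⦄, a ≠ b → ¬ Gᶜ.Adj a b → G.Adj a b := by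
      intro a b hab h
      rw [compl_adj] at h
      by_contra hG
      exact h ⟨hab, hG⟩
    have hII : ∀ ⦃a b : V⦄, Gᶜ.Adj a b → (I a ∩ I b).Nonempty := by
      intro a b h
      obtain ⟨i, hia, hib⟩ := D.edge_cover h
      exact ⟨i, hia, hib⟩
    have hPSint : ∀ p q : V × V, Gᶜ.Adj p.1 p.2 → Gᶜ.Adj q.1 q.2 →
        (PS p ∩ PS q).Nonempty := by
      rintro ⟨u, v⟩ ⟨x, y⟩ huv hxy
      simp only [hPSdef]
      have subl : ∀ (a b : V), (I a ∩ I b).Nonempty → a ∈ ({u, v} : Set V) →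
          b ∈ ({x, y} : Set V) → ((I u ∪ I v) ∩ (I x ∪ I y)).Nonempty := by
        intro a b ⟨i, hia, hib⟩ ha hb
        refine ⟨i, ?_, ?_⟩
        · rcases ha with rfl | ha
          · exact Or.inl hia
          · exact Or.inr (ha ▸ hia)
        · rcases hb with rfl | hb
          · exact Or.inl hib
          · exact Or.inr (hb ▸ hib)
      by_cases h1 : u = x
      · exact subl u u ⟨(hIne u).choose, (hIne u).choose_spec, (hIne u).choose_spec⟩
          (Or.inl rfl) (Or.inl h1)
      by_cases h2 : u = y
      · exact subl u u ⟨(hIne u).choose, (hIne u).choose_spec, (hIne u).choose_spec⟩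
          (Or.inl rfl) (Or.inr h2)
      by_cases h3 : v = x
      · exact subl v v ⟨(hIne v).choose, (hIne v).choose_spec, (hIne v).choose_spec⟩
          (Or.inr rfl) (Or.inl h3)
      by_cases h4' : v = y
      · exact subl v v ⟨(hIne v).choose, (hIne v).choose_spec, (hIne v).choose_spec⟩
          (Or.inr rfl) (Or.inr h4')
      by_cases a1 : Gᶜ.Adj u x
      · exact subl u x (hII a1) (Or.inl rfl) (Or.inl rfl)
      by_cases a2 : Gᶜ.Adj u y
      · exact subl u y (hII a2) (Or.inl rfl) (Or.inr rfl)
      by_cases a3 : Gᶜ.Adj v x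
      · exact subl v x (hII a3) (Or.inr rfl) (Or.inl rfl)
      by_cases a4 : Gᶜ.Adj v y
      · exact subl v y (hII a4) (Or.inr rfl) (Or.inr rfl)
      -- otherwise we find an induced C4
      exfalso
      refine h4 ⟨u, x, v, y, huv.ne, hxy.ne, hadj h1 a1, (hadj h3 a3).symm,
        hadj h4' a4, (hadj h2 a2).symm, ?_, ?_⟩
      · exact ((compl_adj G u v).1 huv).2
      · exact ((compl_adj G x y).1 hxy).2
    -- Helly over the family of pair sets of all complement edges
    set F : Finset (V × V) := Finset.univ.filter (fun p => Gᶜ.Adj p.1 p.2) with hFdef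
    have hmemF : ∀ p : V × V, p ∈ F ↔ Gᶜ.Adj p.1 p.2 := by
      intro p; simp [hFdef]
    set l : List (Set D.ι) := F.toList.map PS with hldef
    have hmeml : ∀ S ∈ l, ∃ p : V × V, Gᶜ.Adj p.1 p.2 ∧ S = PS p := by
      intro S hS
      obtain ⟨p, hp, rfl⟩ := List.mem_map.1 hS
      exact ⟨p, (hmemF p).1 (Finset.mem_toList.1 hp), rfl⟩
    obtain ⟨m, hmC, hml⟩ := helly_list hTa hTc l (PS (u0, v0)) (hPScl _ he0)
      ((hIne u0).imp fun i hi => Or.inl hi)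
      (fun S hS => by obtain ⟨p, hp, rfl⟩ := hmeml S hS; exact hPScl p hp)
      (fun S hS => by obtain ⟨p, hp, rfl⟩ := hmeml S hS; exact hPSint (u0, v0) p he0 hp)
      (fun S hS S' hS' => by
        obtain ⟨p, hp, rfl⟩ := hmeml S hS
        obtain ⟨p', hp', rfl⟩ := hmeml S' hS'
        exact hPSint p p' hp hp')
    have hcover : ∀ ⦃u v : V⦄, Gᶜ.Adj u v → u ∈ D.bag m ∨ v ∈ D.bag m := by
      intro u v h
      have hmem : PS (u, v) ∈ l :=
        List.mem_map.2 ⟨(u, v), Finset.mem_toList.2 ((hmemF (u, v)).2 h), rfl⟩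
      exact hml _ hmem
    -- the complement of the bag of m is a clique in G
    set B := D.bag m with hBdef
    have hcl : ∀ u ∈ Finset.univ \ B, ∀ v ∈ Finset.univ \ B, u ≠ v → G.Adj u v := by
      intro u hu v hv huv
      by_contra hG
      rcases hcover ⟨huv, hG⟩ with h | h
      · exact (Finset.mem_sdiff.1 hu).2 h
      · exact (Finset.mem_sdiff.1 hv).2 h
    have hcard : (Finset.univ \ B).card < k := by
      by_contra h
      push_neg at h
      obtain ⟨t, ht, htc⟩ := Finset.exists_subset_card_eq h
      refine hk t ⟨?_, htc⟩
      intro x hx y hy hxy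
      exact hcl x (ht hx) y (ht hy) hxy
    have h1 : (Finset.univ \ B).card = Fintype.card V - B.card := by
      rw [Finset.card_sdiff_of_subset (Finset.subset_univ _), Finset.card_univ]
    have h2 : B.card ≤ Fintype.card V := Finset.card_le_univ B
    have h3 : B.card ≤ w + 1 := hD m
    omega
  · -- no complement edges: `V` is a clique in `G`, so `card V < k`
    push_neg at hE
    have : Fintype.card V < k := by
      by_contra h
      push_neg at h
      have h' : k ≤ (Finset.univ : Finset V).card := by
        rwa [Finset.card_univ]
      obtain ⟨t, _, htc⟩ := Finset.exists_subset_card_eq h'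
      refine hk t ⟨?_, htc⟩
      intro x _ y _ hxy
      by_contra hG
      exact hE x y ⟨hxy, hG⟩
    omega
end

section
/- For every k-tree G on n vertices with G not isomorphic to Q_n^k, tw(G) + tw(complement of G) = n − 2. -/
open SimpleGraph

section TreeMachinery
variable {ι : Type} {T : SimpleGraph ι}

lemma walk_to_induce {S : Set ι} : ∀ {a b : ι} (w : T.Walk a b), (∀ v ∈ w.support, v ∈ S) →
    ∀ (ha : a ∈ S) (hb : b ∈ S), (T.induce S).Reachable ⟨a, ha⟩ ⟨b, hb⟩ := by
  intro a b w
  induction w with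
  | nil => intro _ ha hb; exact Reachable.refl _
  | @cons a c b h p ih =>
      intro hsupp ha hb
      have hc : c ∈ S := hsupp c (by simp [Walk.support_cons])
      have hadj : (T.induce S).Adj ⟨a, ha⟩ ⟨c, hc⟩ := h
      exact hadj.reachable.trans (ih (fun v hv => hsupp v (by simp [Walk.support_cons, hv])) hc hb)

lemma induce_walk_out {S : Set ι} : ∀ {x y : ↥S} (_ : (T.induce S).Walk x y),
    ∃ w' : T.Walk x.1 y.1, ∀ v ∈ w'.support, v ∈ S := by
  intro x y w
  induction w with
  | @nil u => exact ⟨Walk.nil, by rintro v hv; simp at hv; subst hv; exact u.2⟩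
  | @cons a c b h p ih =>
      obtain ⟨w', hw'⟩ := ih
      refine ⟨Walk.cons h w', ?_⟩
      intro v hv
      rcases (List.mem_cons.mp hv : v = a.1 ∨ v ∈ w'.support) with rfl | hv'
      · exact a.2
      · exact hw' v hv'

lemma path_support_subset_of_connected (hac : T.IsAcyclic) {S : Set ι}
    (hS : (T.induce S).Connected) {a b : ι} (ha : a ∈ S) (hb : b ∈ S)
    (p : T.Walk a b) (hp : p.IsPath) : ∀ v ∈ p.support, v ∈ S := by
  classical
  obtain ⟨w0⟩ := hS.preconnected ⟨a, ha⟩ ⟨b, hb⟩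
  obtain ⟨w, hw⟩ := induce_walk_out w0
  have hpq : (⟨p, hp⟩ : T.Path a b) = w.toPath := hac.path_unique _ _
  intro v hv
  have : v ∈ (w.toPath : T.Walk a b).support := by rw [← hpq]; exact hv
  exact hw v (Walk.support_toPath_subset _ this)

lemma induce_inter_connected (hc : T.Connected) (hac : T.IsAcyclic) {A B : Set ι}
    (hA : (T.induce A).Connected) (hB : (T.induce B).Connected)
    (hne : (A ∩ B).Nonempty) : (T.induce (A ∩ B)).Connected := by
  classical
  obtain ⟨z, hz⟩ := hne
  rw [connected_iff]
  refine ⟨fun x y => ?_, ⟨⟨z, hz⟩⟩⟩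
  obtain ⟨wxy⟩ := hc.preconnected x.1 y.1
  have hp := wxy.toPath
  have hsubA := path_support_subset_of_connected hac hA x.2.1 y.2.1 hp.1 hp.2
  have hsubB := path_support_subset_of_connected hac hB x.2.2 y.2.2 hp.1 hp.2
  have := walk_to_induce (S := A ∩ B) hp.1 (fun v hv => ⟨hsubA v hv, hsubB v hv⟩) ⟨x.2.1, x.2.2⟩ ⟨y.2.1, y.2.2⟩
  exact this

lemma first_touch {P : Set ι} : ∀ {r p : ι} (w : T.Walk r p), w.IsPath → p ∈ P →
    ∃ m, ∃ w1 : T.Walk r m, w1.IsPath ∧ m ∈ P ∧ (∀ v ∈ w1.support, v ∈ P → v = m) ∧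
      w1.support ⊆ w.support := by
  intro r p w
  induction w with
  | nil =>
      intro _ hp
      exact ⟨_, Walk.nil, by simp, hp, by simp, by simp⟩
  | @cons a c b h w ih =>
      intro hpath hb
      by_cases ha : a ∈ P
      · exact ⟨a, Walk.nil, by simp, ha, by simp, by simp⟩
      · obtain ⟨m, w1, hw1, hmP, hfirst, hsub⟩ := ih ((Walk.cons_isPath_iff h w).mp hpath).1 hb
        refine ⟨m, Walk.cons h w1, ?_, hmP, ?_, ?_⟩
        · rw [Walk.cons_isPath_iff]
          exact ⟨hw1, fun hmem => ((Walk.cons_isPath_iff h w).mp hpath).2 (hsub hmem)⟩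
        · intro v hv hvP
          rcases (by simpa [Walk.support_cons] using hv : v = a ∨ v ∈ w1.support) with rfl | hv'
          · exact absurd hvP ha
          · exact hfirst v hv' hvP
        · intro v hv
          rcases (by simpa [Walk.support_cons] using hv : v = a ∨ v ∈ w1.support) with rfl | hv'
          · simp [Walk.support_cons]
          · simp [Walk.support_cons, hsub hv']

lemma isPath_append_of_disjoint {a m b : ι} {p : T.Walk a m} {q : T.Walk m b}
    (hp : p.IsPath) (hq : q.IsPath) (hdisj : ∀ v ∈ p.support, v ∈ q.support → v = m) :
    (p.append q).IsPath := by
  rw [Walk.isPath_def, Walk.support_append]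
  have h1 : p.support.Nodup := hp.support_nodup
  have hq' : (m :: q.support.tail).Nodup := by rw [← q.support_eq_cons]; exact hq.support_nodup
  refine List.Nodup.append h1 (List.Nodup.of_cons hq') ?_
  intro v hvp hvq
  have hvm : v = m := hdisj v hvp (by rw [q.support_eq_cons]; exact List.mem_cons_of_mem _ hvq)
  subst hvm
  exact (List.nodup_cons.mp hq').1 hvq

lemma three_helly (hc : T.Connected) (hac : T.IsAcyclic) {A B C : Set ι}
    (hA : (T.induce A).Connected) (hB : (T.induce B).Connected) (hC : (T.induce C).Connected)
    (pAB : (A ∩ B).Nonempty) (pBC : (B ∩ C).Nonempty) (pAC : (A ∩ C).Nonempty) :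
    (A ∩ B ∩ C).Nonempty := by
  classical
  obtain ⟨p, hpA, hpB⟩ := pAB
  obtain ⟨q, hqB, hqC⟩ := pBC
  obtain ⟨r, hrA, hrC⟩ := pAC
  obtain ⟨wpq0⟩ := hc.preconnected p q
  set Ppq : T.Path p q := wpq0.toPath with hPpq
  have hPpqB : ∀ v ∈ (Ppq : T.Walk p q).support, v ∈ B :=
    path_support_subset_of_connected hac hB hpB hqB _ Ppq.2
  obtain ⟨wrp0⟩ := hc.preconnected r p
  set Prp : T.Path r p := wrp0.toPath with hPrp
  have hPrpA : ∀ v ∈ (Prp : T.Walk r p).support, v ∈ A :=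
    path_support_subset_of_connected hac hA hrA hpA _ Prp.2
  have hpend : p ∈ {v | v ∈ (Ppq : T.Walk p q).support} := Walk.start_mem_support _
  obtain ⟨m, w1, hw1, hmP, hfirst, hsub⟩ := first_touch (P := {v | v ∈ (Ppq : T.Walk p q).support})
    (Prp : T.Walk r p) Prp.2 hpend
  have hmB : m ∈ B := hPpqB m hmP
  have hmA : m ∈ A := hPrpA m (hsub (Walk.end_mem_support _))
  have hmC : m ∈ C := by
    have hdroppath : ((Ppq : T.Walk p q).dropUntil m hmP).IsPath := Ppq.2.dropUntil hmP
    have hdropsub := Walk.support_dropUntil_subset (Ppq : T.Walk p q) hmP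
    have happ : (w1.append ((Ppq : T.Walk p q).dropUntil m hmP)).IsPath :=
      isPath_append_of_disjoint hw1 hdroppath (fun v hv1 hv2 => hfirst v hv1 (hdropsub hv2))
    have hsupp := path_support_subset_of_connected hac hC hrC hqC _ happ
    refine hsupp m ?_
    rw [Walk.mem_support_append_iff]
    exact Or.inl (Walk.end_mem_support _)
  exact ⟨m, ⟨hmA, hmB⟩, hmC⟩

lemma finset_helly_aux (hc : T.Connected) (hac : T.IsAcyclic) :
    ∀ (N : ℕ) (F : Finset (Set ι)), F.card ≤ N → (∀ A ∈ F, (T.induce A).Connected) →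
    (∀ A ∈ F, ∀ B ∈ F, ((A : Set ι) ∩ B).Nonempty) → F.Nonempty →
    ∃ x : ι, ∀ A ∈ F, x ∈ A := by
  classical
  intro N
  induction N with
  | zero => intro F hcard _ _ hne; simp [Finset.card_eq_zero.mp (Nat.le_zero.mp hcard)] at hne
  | succ n ih =>
    intro F hcard hconn hpair hne
    obtain ⟨A, hAF⟩ := hne
    by_cases hsing : ∀ B ∈ F, B = A
    · obtain ⟨x, hx, _⟩ := hpair A hAF A hAF
      exact ⟨x, fun B hB => (hsing B hB) ▸ hx⟩
    · push_neg at hsing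
      obtain ⟨B, hBF, hBA⟩ := hsing
      set F' : Finset (Set ι) := insert (A ∩ B) ((F.erase A).erase B) with hF'
      have hBmem : B ∈ F.erase A := Finset.mem_erase.mpr ⟨hBA, hBF⟩
      have hcard2 : 2 ≤ F.card := Finset.one_lt_card.mpr ⟨A, hAF, B, hBF, Ne.symm hBA⟩
      have hcard' : F'.card ≤ n := by
        calc F'.card ≤ ((F.erase A).erase B).card + 1 := Finset.card_insert_le _ _
        _ = (F.card - 2) + 1 := by
            rw [Finset.card_erase_of_mem hBmem, Finset.card_erase_of_mem hAF]; omega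
        _ ≤ n := by omega
      have hmemF' : ∀ C ∈ F', C = A ∩ B ∨ (C ∈ F ∧ C ≠ A ∧ C ≠ B) := by
        intro C hC
        rcases Finset.mem_insert.mp hC with h | h
        · exact Or.inl h
        · have h1 := Finset.mem_erase.mp h
          have h2 := Finset.mem_erase.mp h1.2
          exact Or.inr ⟨h2.2, h2.1, h1.1⟩
      have hABne : ((A : Set ι) ∩ B).Nonempty := hpair A hAF B hBF
      have hABconn : (T.induce ((A : Set ι) ∩ B)).Connected :=
        induce_inter_connected hc hac (hconn A hAF) (hconn B hBF) hABne
      have hconn' : ∀ C ∈ F', (T.induce C).Connected := by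
        intro C hC
        rcases hmemF' C hC with rfl | ⟨hCF, _, _⟩
        · exact hABconn
        · exact hconn C hCF
      have hpair' : ∀ C ∈ F', ∀ D ∈ F', ((C : Set ι) ∩ D).Nonempty := by
        intro C hC D hD
        rcases hmemF' C hC with rfl | ⟨hCF, _, _⟩ <;> rcases hmemF' D hD with rfl | ⟨hDF, _, _⟩
        · exact hABne.mono (by intro x hx; exact ⟨hx, hx⟩)
        · exact three_helly hc hac (hconn A hAF) (hconn B hBF) (hconn D hDF)
            hABne (hpair B hBF D hDF) (hpair A hAF D hDF)
        · obtain ⟨x, hx⟩ := three_helly hc hac (hconn A hAF) (hconn B hBF) (hconn C hCF)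
            hABne (hpair B hBF C hCF) (hpair A hAF C hCF)
          exact ⟨x, hx.2, hx.1⟩
        · exact hpair C hCF D hDF
      obtain ⟨x, hx⟩ := ih F' hcard' hconn' hpair' ⟨A ∩ B, Finset.mem_insert_self _ _⟩
      refine ⟨x, fun C hCF => ?_⟩
      by_cases hCA : C = A
      · subst hCA; exact (hx _ (Finset.mem_insert_self _ _)).1
      · by_cases hCB : C = B
        · subst hCB; exact (hx _ (Finset.mem_insert_self _ _)).2
        · exact hx C (Finset.mem_insert.mpr (Or.inr (Finset.mem_erase.mpr ⟨hCB, Finset.mem_erase.mpr ⟨hCA, hCF⟩⟩)))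

lemma finset_helly (hc : T.Connected) (hac : T.IsAcyclic) (F : Finset (Set ι))
    (hconn : ∀ A ∈ F, (T.induce A).Connected)
    (hpair : ∀ A ∈ F, ∀ B ∈ F, ((A : Set ι) ∩ B).Nonempty) (hne : F.Nonempty) :
    ∃ x : ι, ∀ A ∈ F, x ∈ A :=
  finset_helly_aux hc hac F.card F le_rfl hconn hpair hne

end TreeMachinery

section ParentTree
variable {m : ℕ}

def parentGraph (f : Fin m → Fin m) : SimpleGraph (Fin m) :=
  SimpleGraph.fromRel (fun a b => f a = b)

lemma parentGraph_adj {f : Fin m → Fin m} {a b : Fin m} :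
    (parentGraph f).Adj a b ↔ a ≠ b ∧ (f a = b ∨ f b = a) := by
  simp [parentGraph, fromRel_adj]

lemma parentGraph_adj_parent {f : Fin m → Fin m} {a : Fin m} (h : f a ≠ a) :
    (parentGraph f).Adj a (f a) := parentGraph_adj.mpr ⟨fun hh => h hh.symm, Or.inl rfl⟩

lemma walk_mem_closed {G' : SimpleGraph (Fin m)} {D : Set (Fin m)}
    (hcl : ∀ x y, x ∈ D → G'.Adj x y → y ∈ D) :
    ∀ {a b : Fin m} (_ : G'.Walk a b), a ∈ D → b ∈ D := by
  intro a b w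
  induction w with
  | nil => exact id
  | cons h p ih => intro ha; exact ih (hcl _ _ ha h)

variable {f : Fin m → Fin m}

lemma parentGraph_reachable_root (hf : ∀ j : Fin m, (j : ℕ) ≠ 0 → f j < j)
    (j : Fin m) (r : Fin m) (hr : (r : ℕ) = 0) :
    (parentGraph f).Reachable j r := by
  obtain ⟨jval, hjlt⟩ := j
  induction jval using Nat.strong_induction_on with
  | _ jval ih =>
    by_cases hj0 : jval = 0
    · subst hj0
      have : (⟨0, hjlt⟩ : Fin m) = r := by apply Fin.ext; simp [hr]
      rw [this]
    · have hlt := hf ⟨jval, hjlt⟩ (by simpa using hj0)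
      have hne : f ⟨jval, hjlt⟩ ≠ ⟨jval, hjlt⟩ := ne_of_lt hlt
      have hadj := parentGraph_adj_parent (f := f) hne
      have := ih (f ⟨jval, hjlt⟩ : Fin m).1 hlt (f ⟨jval, hjlt⟩).2
      exact hadj.reachable.trans this

lemma parentGraph_connected (hf : ∀ j : Fin m, (j : ℕ) ≠ 0 → f j < j) (hm : 0 < m) :
    (parentGraph f).Connected := by
  rw [connected_iff]
  refine ⟨fun x y => ?_, ⟨⟨0, hm⟩⟩⟩
  exact (parentGraph_reachable_root hf x ⟨0, hm⟩ rfl).trans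
    (parentGraph_reachable_root hf y ⟨0, hm⟩ rfl).symm

lemma parentGraph_acyclic (hf0 : ∀ j, f j ≤ j) (hf : ∀ j : Fin m, (j : ℕ) ≠ 0 → f j < j) :
    (parentGraph f).IsAcyclic := by
  rw [isAcyclic_iff_forall_adj_isBridge]
  have key : ∀ a b : Fin m, f a = b → a ≠ b →
      ¬ (parentGraph f \ fromEdgeSet {s(a, b)}).Reachable a b := by
    intro a b hab hne hreach
    set D : Set (Fin m) := {x | ∃ t : ℕ, f^[t] x = a} with hD
    have hge : ∀ (t : ℕ) (x : Fin m), f^[t] x = a → a ≤ x := by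
      intro t
      induction t with
      | zero => intro x hx; simp at hx; exact hx ▸ le_rfl
      | succ t iht =>
          intro x hx
          rw [Function.iterate_succ_apply] at hx
          exact le_trans (iht _ hx) (hf0 x)
    have ha0 : (a : ℕ) ≠ 0 := by
      intro h0
      have h1 : f a ≤ a := hf0 a
      have h2 : f a = a := by
        apply Fin.ext
        have := Fin.le_iff_val_le_val.mp h1
        omega
      exact hne (h2.symm.trans hab)
    have hblt : b < a := hab ▸ hf a ha0
    have hbD : b ∉ D := by
      intro ⟨t, ht⟩
      exact absurd (hge t b ht) (not_le.mpr hblt)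
    have haD : a ∈ D := ⟨0, rfl⟩
    have hcl : ∀ x y, x ∈ D → (parentGraph f \ fromEdgeSet {s(a, b)}).Adj x y → y ∈ D := by
      intro x y hxD hadj
      rw [sdiff_adj] at hadj
      obtain ⟨hadj1, hadj2⟩ := hadj
      rw [parentGraph_adj] at hadj1
      obtain ⟨hxy, hc | hc⟩ := hadj1
      · -- f x = y
        have hxa : x ≠ a := by
          rintro rfl
          apply hadj2
          rw [fromEdgeSet_adj]
          have hyb : y = b := hc.symm.trans hab
          subst hyb
          simp [hxy, hne]
        obtain ⟨t, ht⟩ := hxD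
        match t, ht with
        | 0, ht => exact absurd ht hxa
        | t+1, ht =>
            rw [Function.iterate_succ_apply] at ht
            exact ⟨t, hc ▸ ht⟩
      · -- f y = x
        obtain ⟨t, ht⟩ := hxD
        exact ⟨t + 1, by rw [Function.iterate_succ_apply, hc]; exact ht⟩
    obtain ⟨w⟩ := hreach
    exact hbD (walk_mem_closed hcl w haD)
  intro v w hadj
  rw [isBridge_iff]
  rw [parentGraph_adj] at hadj
  obtain ⟨hne, hc | hc⟩ := hadj
  · exact key v w hc hne
  · have := key w v hc hne.symm
    rw [Sym2.eq_swap (a := w) (b := v)] at this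
    exact fun hr => this hr.symm

lemma induce_connected_of_descent {T : SimpleGraph (Fin m)} {S : Set (Fin m)} {r : Fin m}
    (hr : r ∈ S) (hdesc : ∀ j, j ∈ S → j ≠ r → ∃ j', j' ∈ S ∧ T.Adj j j' ∧ j' < j) :
    (T.induce S).Connected := by
  rw [connected_iff]
  have main : ∀ (n : ℕ) (j : Fin m) (hj : j ∈ S), (j : ℕ) ≤ n →
      (T.induce S).Reachable ⟨j, hj⟩ ⟨r, hr⟩ := by
    intro n
    induction n with
    | zero =>
        intro j hj hjn
        by_cases hjr : j = r
        · subst hjr; exact Reachable.refl _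
        · obtain ⟨j', _, _, hlt⟩ := hdesc j hj hjr
          exact absurd (Fin.lt_iff_val_lt_val.mp hlt) (by omega)
    | succ n ihn =>
        intro j hj hjn
        by_cases hjr : j = r
        · subst hjr; exact Reachable.refl _
        · obtain ⟨j', hj'S, hadj, hlt⟩ := hdesc j hj hjr
          have hadj' : (T.induce S).Adj ⟨j, hj⟩ ⟨j', hj'S⟩ := hadj
          exact hadj'.reachable.trans (ihn j' hj'S (by
            have := Fin.lt_iff_val_lt_val.mp hlt; omega))
  exact ⟨fun x y => (main _ x.1 x.2 le_rfl).trans (main _ y.1 y.2 le_rfl).symm, ⟨⟨r, hr⟩⟩⟩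

end ParentTree

section TrivialDecomp
variable {V : Type} [Fintype V] (G : SimpleGraph V)

noncomputable def trivialDecomp [Nonempty V] : TreeDecomp G where
  ι := PUnit
  T := ⊥
  conn := by
    rw [connected_iff]
    exact ⟨fun x y => (Subsingleton.elim x y) ▸ Reachable.refl _, ⟨PUnit.unit⟩⟩
  acyclic := by
    intro v c hc
    cases c with
    | nil => simp at hc
    | cons h p => exact h.elim
  bag := fun _ => Finset.univ
  cover := fun v => ⟨PUnit.unit, Finset.mem_univ v⟩
  edge_cover := fun u v _ => ⟨PUnit.unit, Finset.mem_univ u, Finset.mem_univ v⟩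
  bag_conn := by
    intro v
    rw [connected_iff]
    refine ⟨fun x y => (Subsingleton.elim x y) ▸ Reachable.refl _, ⟨⟨PUnit.unit, by simp⟩⟩⟩

lemma treewidth_set_nonempty [Nonempty V] :
    {t | ∃ D : TreeDecomp G, ∀ i, (D.bag i).card ≤ t + 1}.Nonempty :=
  ⟨Fintype.card V, trivialDecomp G, fun _ => by
    simpa using Nat.le_succ_of_le (Finset.card_le_univ _)⟩

lemma treewidth_le {c : ℕ} (D : TreeDecomp G) (hD : ∀ i, (D.bag i).card ≤ c + 1) :
    treewidth G ≤ c := Nat.sInf_le ⟨D, hD⟩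

lemma le_treewidth [Nonempty V] {c : ℕ}
    (h : ∀ D : TreeDecomp G, ∃ i, c + 1 ≤ (D.bag i).card) : c ≤ treewidth G := by
  apply le_csInf (treewidth_set_nonempty G)
  rintro t ⟨D, hD⟩
  obtain ⟨i, hi⟩ := h D
  have := hD i
  omega

section KTreeStructure
variable {V : Type} [Fintype V] {k n : ℕ} {G : SimpleGraph V}

/-- The initial clique of the construction ordering. -/
def initClique (e : V ≃ Fin n) (k : ℕ) : Finset V :=
  Finset.univ.filter (fun x => (e x : ℕ) < k + 1)

lemma mem_initClique {e : V ≃ Fin n} {x : V} : x ∈ initClique e k ↔ (e x : ℕ) < k + 1 := by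
  simp [initClique]

lemma initClique_card (e : V ≃ Fin n) (hkn : k + 1 ≤ n) : (initClique e k).card = k + 1 := by
  classical
  have himg : (initClique e k).image (fun x => (e x : ℕ)) = Finset.range (k + 1) := by
    ext m
    simp only [Finset.mem_image, Finset.mem_range, mem_initClique]
    constructor
    · rintro ⟨x, hx, rfl⟩; exact hx
    · intro hm
      exact ⟨e.symm ⟨m, lt_of_lt_of_le hm hkn⟩, by simpa [mem_initClique] using hm, by simp⟩
  have hinj : Set.InjOn (fun x => ((e x : ℕ))) (initClique e k) := by
    intro a _ b _ hab
    have : e a = e b := Fin.ext hab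
    exact e.injective this
  rw [← Finset.card_image_of_injOn hinj, himg, Finset.card_range]

lemma initClique_isClique (e : V ≃ Fin n)
    (hbase : ∀ i j : Fin n, i < j → (j : ℕ) < k + 1 → G.Adj (e.symm i) (e.symm j)) :
    G.IsClique (initClique e k) := by
  intro x hx y hy hxy
  simp only [Finset.mem_coe, mem_initClique] at hx hy
  have hne : e x ≠ e y := fun hc => hxy (e.injective hc)
  rcases lt_or_gt_of_ne hne with hlt | hlt
  · have := hbase (e x) (e y) hlt hy
    simpa using this
  · have := hbase (e y) (e x) hlt hx
    exact (by simpa using this : G.Adj y x).symm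

lemma kTree_clique_card_le (e : V ≃ Fin n)
    (hC : ∀ j : Fin n, k + 1 ≤ (j : ℕ) →
      ∃ C : Finset V, G.IsNClique k C ∧ (∀ x ∈ C, ((e x : ℕ) < (j : ℕ))) ∧
        ∀ i : Fin n, i < j → (G.Adj (e.symm i) (e.symm j) ↔ e.symm i ∈ C))
    (W : Finset V) (hW : G.IsClique ↑W) : W.card ≤ k + 1 := by
  classical
  rcases W.eq_empty_or_nonempty with rfl | hne
  · simp
  obtain ⟨x0, hx0W, hx0max⟩ := Finset.exists_max_image W (fun x => (e x : ℕ)) hne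
  by_cases hsmall : (e x0 : ℕ) < k + 1
  · -- all indices small
    have himg : W.image (fun x => (e x : ℕ)) ⊆ Finset.range (k + 1) := by
      intro m hm
      obtain ⟨x, hx, rfl⟩ := Finset.mem_image.mp hm
      exact Finset.mem_range.mpr (lt_of_le_of_lt (hx0max x hx) hsmall)
    have hinj : Set.InjOn (fun x => ((e x : ℕ))) W :=
      fun a _ b _ hab => e.injective (Fin.ext hab)
    calc W.card = (W.image (fun x => (e x : ℕ))).card :=
          (Finset.card_image_of_injOn hinj).symm
      _ ≤ (Finset.range (k + 1)).card := Finset.card_le_card himg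
      _ = k + 1 := Finset.card_range _
  · push_neg at hsmall
    obtain ⟨C, hC1, _, hC3⟩ := hC (e x0) hsmall
    have hsub : W.erase x0 ⊆ C := by
      intro x hx
      obtain ⟨hxne, hxW⟩ := Finset.mem_erase.mp hx
      have hlt : e x < e x0 := by
        have h1 := hx0max x hxW
        have h2 : e x ≠ e x0 := fun hc => hxne (e.injective hc)
        exact Fin.lt_iff_val_lt_val.mpr (lt_of_le_of_ne h1 (fun hc => h2 (Fin.ext hc)))
      have hadj : G.Adj x x0 := hW hxW hx0W hxne
      have := (hC3 (e x) hlt).mp (by simpa using hadj)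
      simpa using this
    calc W.card ≤ (W.erase x0).card + 1 := by
          rw [Finset.card_erase_of_mem hx0W]; omega
      _ ≤ C.card + 1 := by have := Finset.card_le_card hsub; omega
      _ = k + 1 := by rw [hC1.2]

lemma kTree_no_C4 (e : V ≃ Fin n)
    (hbase : ∀ i j : Fin n, i < j → (j : ℕ) < k + 1 → G.Adj (e.symm i) (e.symm j))
    (hC : ∀ j : Fin n, k + 1 ≤ (j : ℕ) →
      ∃ C : Finset V, G.IsNClique k C ∧ (∀ x ∈ C, ((e x : ℕ) < (j : ℕ))) ∧
        ∀ i : Fin n, i < j → (G.Adj (e.symm i) (e.symm j) ↔ e.symm i ∈ C)) :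
    ¬ HasInducedC4 G := by
  classical
  rintro ⟨a, b, c, d, hac, hbd, hab, hbc, hcd, hda, hnac, hnbd⟩
  -- helper: the earlier neighbourhood of a big vertex is a clique
  have helper : ∀ x y z : V, (e y : ℕ) < e x → (e z : ℕ) < e x → y ≠ z →
      G.Adj x y → G.Adj x z → G.Adj y z ∨ ((e x : ℕ) < k + 1) := by
    intro x y z hy hz hyz hxy hxz
    by_cases hbig : k + 1 ≤ (e x : ℕ)
    · obtain ⟨C, hC1, _, hC3⟩ := hC (e x) hbig
      have hyC : y ∈ C := by
        have := (hC3 (e y) hy).mp (by simpa using hxy.symm)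
        simpa using this
      have hzC : z ∈ C := by
        have := (hC3 (e z) hz).mp (by simpa using hxz.symm)
        simpa using this
      exact Or.inl (hC1.1 hyC hzC hyz)
    · exact Or.inr (by omega)
  -- adjacency between small-index distinct vertices
  have small_adj : ∀ x y : V, x ≠ y → (e x : ℕ) < k + 1 → (e y : ℕ) < k + 1 → G.Adj x y := by
    intro x y hxy hx hy
    have hne : e x ≠ e y := fun hc => hxy (e.injective hc)
    rcases lt_or_gt_of_ne hne with hlt | hlt
    · have := hbase (e x) (e y) hlt hy
      simpa using this
    · exact ((by simpa using hbase (e y) (e x) hlt hx : G.Adj y x)).symm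
  -- the four vertices are distinct
  have hdist : a ≠ b ∧ b ≠ c ∧ c ≠ d ∧ d ≠ a := ⟨hab.ne, hbc.ne, hcd.ne, hda.ne⟩
  -- max vertex among the four
  set v4 : Finset V := {a, b, c, d} with hv4
  obtain ⟨x0, hx0v, hx0max⟩ := Finset.exists_max_image v4 (fun x => (e x : ℕ))
    ⟨a, by simp [hv4]⟩
  have hamem : a ∈ v4 := by simp [hv4]
  have hbmem : b ∈ v4 := by simp [hv4]
  have hcmem : c ∈ v4 := by simp [hv4]
  have hdmem : d ∈ v4 := by simp [hv4]
  have hsmall_contra : ¬ ((e x0 : ℕ) < k + 1) := by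
    intro hsm
    exact hnac (small_adj a c hac (lt_of_le_of_lt (hx0max a hamem) hsm)
      (lt_of_le_of_lt (hx0max c hcmem) hsm))
  -- helper applied needs strict inequalities; get them from injectivity
  have strict : ∀ y : V, y ∈ v4 → y ≠ x0 → (e y : ℕ) < e x0 := by
    intro y hy hyne
    have h1 := hx0max y hy
    have h2 : e y ≠ e x0 := fun hcc => hyne (e.injective hcc)
    have := Fin.val_ne_of_ne h2
    omega
  have hx0cases : x0 = a ∨ x0 = b ∨ x0 = c ∨ x0 = d := by
    simpa [hv4] using hx0v
  rcases hx0cases with rfl | rfl | rfl | rfl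
  · rcases helper x0 b d (strict b hbmem hab.ne') (strict d hdmem ((hda.ne))) hbd hab hda.symm with hbd' | hsm
    · exact hnbd hbd'
    · exact hsmall_contra hsm
  · rcases helper x0 a c (strict a hamem (hab.ne)) (strict c hcmem (hbc.ne')) hac hab.symm hbc with h' | hsm
    · exact hnac h'
    · exact hsmall_contra hsm
  · rcases helper x0 b d (strict b hbmem (hbc.ne)) (strict d hdmem (hcd.ne')) hbd hbc.symm hcd with h' | hsm
    · exact hnbd h'
    · exact hsmall_contra hsm
  · rcases helper x0 a c (strict a hamem (hda.ne')) (strict c hcmem (hcd.ne)) hac hda hcd.symm with h' | hsm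
    · exact hnac h'
    · exact hsmall_contra hsm

end KTreeStructure

section HellyApp
variable {ι : Type} {T : SimpleGraph ι}

lemma induce_reachable_mono {S1 S2 : Set ι} (hsub : S1 ⊆ S2) {x y : ι} (hx1 : x ∈ S1)
    (hy1 : y ∈ S1) (h : (T.induce S1).Reachable ⟨x, hx1⟩ ⟨y, hy1⟩) :
    (T.induce S2).Reachable ⟨x, hsub hx1⟩ ⟨y, hsub hy1⟩ := by
  obtain ⟨w⟩ := h
  obtain ⟨w', hw'⟩ := induce_walk_out w
  exact walk_to_induce w' (fun v hv => hsub (hw' v hv)) _ _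

end HellyApp

section DecompApp
variable {V : Type} {G : SimpleGraph V} (D : TreeDecomp G)

lemma bagSet_conn (A : Set V) (hA : (G.induce A).Connected) :
    (D.T.induce {i | ∃ v ∈ A, v ∈ D.bag i}).Connected := by
  classical
  set S : Set D.ι := {i | ∃ v ∈ A, v ∈ D.bag i} with hS
  have key : ∀ (v w : V) (wk : G.Walk v w), (∀ z ∈ wk.support, z ∈ A) →
      ∀ (i j : D.ι) (hi : v ∈ D.bag i) (hj : w ∈ D.bag j)
      (hiS : i ∈ S) (hjS : j ∈ S), (D.T.induce S).Reachable ⟨i, hiS⟩ ⟨j, hjS⟩ := by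
    intro v w wk
    induction wk with
    | @nil v =>
        intro hsupp i j hi hj hiS hjS
        have hvA : v ∈ A := hsupp v (by simp)
        have hsub : {i | v ∈ D.bag i} ⊆ S := fun i hi => ⟨v, hvA, hi⟩
        exact induce_reachable_mono hsub hi hj ((D.bag_conn v).preconnected ⟨i, hi⟩ ⟨j, hj⟩)
    | @cons v c w hadj p ih =>
        intro hsupp i j hi hj hiS hjS
        have hvA : v ∈ A := hsupp v (by simp [Walk.support_cons])
        have hcA : c ∈ A := hsupp c (by simp [Walk.support_cons])
        obtain ⟨i0, hvi0, hci0⟩ := D.edge_cover hadj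
        have hi0S : i0 ∈ S := ⟨v, hvA, hvi0⟩
        have hsub : {i' | v ∈ D.bag i'} ⊆ S := fun i' hi' => ⟨v, hvA, hi'⟩
        have step1 : (D.T.induce S).Reachable ⟨i, hiS⟩ ⟨i0, hi0S⟩ :=
          induce_reachable_mono hsub hi hvi0 ((D.bag_conn v).preconnected ⟨i, hi⟩ ⟨i0, hvi0⟩)
        exact step1.trans (ih (fun z hz => hsupp z (by simp [Walk.support_cons, hz]))
          i0 j hci0 hj hi0S hjS)
  rw [connected_iff]
  obtain ⟨⟨v0, hv0⟩⟩ := hA.nonempty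
  obtain ⟨i0, hi0⟩ := D.cover v0
  refine ⟨fun x y => ?_, ⟨⟨i0, ⟨v0, hv0, hi0⟩⟩⟩⟩
  obtain ⟨ix, hixS⟩ := x
  obtain ⟨iy, hiyS⟩ := y
  obtain ⟨vx, hvxA, hvx⟩ := hixS
  obtain ⟨vy, hvyA, hvy⟩ := hiyS
  obtain ⟨w0⟩ := hA.preconnected ⟨vx, hvxA⟩ ⟨vy, hvyA⟩
  obtain ⟨w, hw⟩ := induce_walk_out w0
  exact key vx vy w hw ix iy hvx hvy _ _

lemma clique_in_bag (W : Finset V) (hW : G.IsClique ↑W) (hne : W.Nonempty) :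
    ∃ i, ∀ x ∈ W, x ∈ D.bag i := by
  classical
  set F : Finset (Set D.ι) := W.image (fun v => {i | v ∈ D.bag i}) with hF
  have hmem : ∀ A ∈ F, ∃ v ∈ W, A = {i | v ∈ D.bag i} := by
    intro A hA
    obtain ⟨v, hv, rfl⟩ := Finset.mem_image.mp hA
    exact ⟨v, hv, rfl⟩
  have hconn : ∀ A ∈ F, (D.T.induce A).Connected := by
    intro A hA
    obtain ⟨v, _, rfl⟩ := hmem A hA
    exact D.bag_conn v
  have hpair : ∀ A ∈ F, ∀ B ∈ F, ((A : Set D.ι) ∩ B).Nonempty := by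
    intro A hA B hB
    obtain ⟨v, hvW, rfl⟩ := hmem A hA
    obtain ⟨w, hwW, rfl⟩ := hmem B hB
    by_cases hvw : v = w
    · subst hvw
      obtain ⟨i, hi⟩ := D.cover v
      exact ⟨i, hi, hi⟩
    · obtain ⟨i, hi1, hi2⟩ := D.edge_cover (hW hvW hwW hvw)
      exact ⟨i, hi1, hi2⟩
  obtain ⟨x, hx⟩ := finset_helly D.conn D.acyclic F hconn hpair
    ⟨_, Finset.mem_image_of_mem _ hne.choose_spec⟩
  exact ⟨x, fun v hv => hx _ (Finset.mem_image_of_mem _ hv)⟩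

lemma bramble_hit [Fintype V] (𝓑 : Set (Set V)) (hB : IsBramble G 𝓑) :
    ∃ i, ∀ A ∈ 𝓑, ∃ v ∈ A, v ∈ D.bag i := by
  classical
  have hι : Nonempty D.ι := D.conn.nonempty
  rcases Set.eq_empty_or_nonempty 𝓑 with rfl | hBne
  · exact ⟨hι.some, by simp⟩
  set Bfin : Finset (Set V) := (Set.toFinite 𝓑).toFinset with hBfin
  set F : Finset (Set D.ι) := Bfin.image (fun A => {i | ∃ v ∈ A, v ∈ D.bag i}) with hF
  have hmem : ∀ X ∈ F, ∃ A ∈ 𝓑, X = {i | ∃ v ∈ A, v ∈ D.bag i} := by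
    intro X hX
    obtain ⟨A, hA, rfl⟩ := Finset.mem_image.mp hX
    exact ⟨A, (Set.Finite.mem_toFinset _).mp hA, rfl⟩
  have hconn : ∀ X ∈ F, (D.T.induce X).Connected := by
    intro X hX
    obtain ⟨A, hA, rfl⟩ := hmem X hX
    exact bagSet_conn D A (hB.1 A hA)
  have hpair : ∀ X ∈ F, ∀ Y ∈ F, ((X : Set D.ι) ∩ Y).Nonempty := by
    intro X hX Y hY
    obtain ⟨A, hA, rfl⟩ := hmem X hX
    obtain ⟨B', hB', rfl⟩ := hmem Y hY
    rcases hB.2 A hA B' hB' with ⟨z, hzA, hzB⟩ | ⟨a, haA, b, hbB, hadj⟩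
    · obtain ⟨i, hi⟩ := D.cover z
      exact ⟨i, ⟨z, hzA, hi⟩, ⟨z, hzB, hi⟩⟩
    · obtain ⟨i, hi1, hi2⟩ := D.edge_cover hadj
      exact ⟨i, ⟨a, haA, hi1⟩, ⟨b, hbB, hi2⟩⟩
  have hFne : F.Nonempty := by
    obtain ⟨A, hA⟩ := hBne
    exact ⟨_, Finset.mem_image_of_mem _ ((Set.Finite.mem_toFinset _).mpr hA)⟩
  obtain ⟨i, hi⟩ := finset_helly D.conn D.acyclic F hconn hpair hFne
  refine ⟨i, fun A hA => ?_⟩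
  have := hi _ (Finset.mem_image_of_mem _ ((Set.Finite.mem_toFinset (Set.toFinite 𝓑)).mpr hA))
  exact this

end DecompApp

section LowerBounds
variable {V : Type} [Fintype V] [Nonempty V] {G : SimpleGraph V}

lemma le_treewidth_of_clique (W : Finset V) (hW : G.IsClique ↑W) (hne : W.Nonempty) :
    W.card - 1 ≤ treewidth G := by
  classical
  apply le_treewidth
  intro D
  obtain ⟨i, hi⟩ := clique_in_bag D W hW hne
  refine ⟨i, ?_⟩
  have := Finset.card_le_card (fun x hx => hi x hx : W ⊆ D.bag i)
  have hc : 1 ≤ W.card := Finset.card_pos.mpr hne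
  omega

lemma le_treewidth_of_bramble (𝓑 : Set (Set V)) (hB : IsBramble G 𝓑) (c : ℕ)
    (hhit : ∀ S : Finset V, (∀ A ∈ 𝓑, ∃ v ∈ A, v ∈ S) → c + 1 ≤ S.card) :
    c ≤ treewidth G := by
  classical
  apply le_treewidth
  intro D
  obtain ⟨i, hi⟩ := bramble_hit D 𝓑 hB
  exact ⟨i, hhit _ hi⟩

end LowerBounds

lemma kTree_treewidth_le {V : Type} [Fintype V] {k n : ℕ} {G : SimpleGraph V} (e : V ≃ Fin n)
    (hkn : k + 1 ≤ n)
    (hbase : ∀ i j : Fin n, i < j → (j : ℕ) < k + 1 → G.Adj (e.symm i) (e.symm j))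
    (hC : ∀ j : Fin n, k + 1 ≤ (j : ℕ) →
      ∃ C : Finset V, G.IsNClique k C ∧ (∀ x ∈ C, ((e x : ℕ) < (j : ℕ))) ∧
        ∀ i : Fin n, i < j → (G.Adj (e.symm i) (e.symm j) ↔ e.symm i ∈ C)) :
    treewidth G ≤ k := by
  classical
  have npos : 0 < n := by omega
  have hC' : ∀ j : Fin n, ∃ C : Finset V, k + 1 ≤ (j : ℕ) →
      (G.IsNClique k C ∧ (∀ x ∈ C, ((e x : ℕ) < (j : ℕ))) ∧
        ∀ i : Fin n, i < j → (G.Adj (e.symm i) (e.symm j) ↔ e.symm i ∈ C)) := by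
    intro j
    by_cases hj : k + 1 ≤ (j : ℕ)
    · obtain ⟨C, h1, h2, h3⟩ := hC j hj
      exact ⟨C, fun _ => ⟨h1, h2, h3⟩⟩
    · exact ⟨∅, fun hj' => absurd hj' hj⟩
  choose C hCp using hC'
  set M : Fin n → ℕ := fun j => (C j).sup (fun x => (e x : ℕ)) with hM
  have hMlt : ∀ j : Fin n, k + 1 ≤ (j : ℕ) → M j < (j : ℕ) := by
    intro j hj
    apply Finset.sup_lt_iff (show (⊥ : ℕ) < (j : ℕ) by exact (by omega : (0:ℕ) < (j:ℕ))) |>.mpr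
    intro x hx
    exact (hCp j hj).2.1 x hx
  have hfval : ∀ j : Fin n, (if (j : ℕ) < k + 1 then (j : ℕ) - 1 else M j) < n := by
    intro j
    split
    · have := j.2; omega
    · have := hMlt j (by omega)
      have := j.2; omega
  set f : Fin n → Fin n := fun j => ⟨if (j : ℕ) < k + 1 then (j : ℕ) - 1 else M j, hfval j⟩
    with hf_def
  have hf0 : ∀ j, f j ≤ j := by
    intro j
    rw [Fin.le_iff_val_le_val]
    show (if (j : ℕ) < k + 1 then (j : ℕ) - 1 else M j) ≤ (j : ℕ)
    split
    · omega
    · exact le_of_lt (hMlt j (by omega))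
  have hf : ∀ j : Fin n, (j : ℕ) ≠ 0 → f j < j := by
    intro j hj
    rw [Fin.lt_iff_val_lt_val]
    show (if (j : ℕ) < k + 1 then (j : ℕ) - 1 else M j) < (j : ℕ)
    split
    · omega
    · exact hMlt j (by omega)
  set bag : Fin n → Finset V := fun j =>
    if (j : ℕ) < k + 1 then initClique e k else insert (e.symm j) (C j) with hbag
  have hbag_small : ∀ j : Fin n, (j : ℕ) < k + 1 → bag j = initClique e k := by
    intro j hj; simp only [hbag, if_pos hj]
  have hbag_big : ∀ j : Fin n, k + 1 ≤ (j : ℕ) → bag j = insert (e.symm j) (C j) := by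
    intro j hj; simp only [hbag]; rw [if_neg (by omega)]
  -- the parent bag contains C j
  have hCbag : ∀ j : Fin n, k + 1 ≤ (j : ℕ) → ∀ x ∈ C j, x ∈ bag (f j) := by
    intro j hj x hx
    have hfj : (f j : ℕ) = M j := by
      show (if (j : ℕ) < k + 1 then (j : ℕ) - 1 else M j) = M j
      rw [if_neg (by omega)]
    by_cases hsmall : M j < k + 1
    · rw [hbag_small (f j) (by omega)]
      rw [mem_initClique]
      have : (e x : ℕ) ≤ M j := Finset.le_sup (f := fun x => ((e x : ℕ))) hx
      omega
    · push_neg at hsmall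
      rw [hbag_big (f j) (by omega)]
      have hCne : (C j).Nonempty := by
        by_contra hemp
        rw [Finset.not_nonempty_iff_eq_empty] at hemp
        have : M j = 0 := by simp [hM, hemp]
        omega
      obtain ⟨x0, hx0C, hx0⟩ := Finset.exists_mem_eq_sup (C j) hCne (fun x => (e x : ℕ))
      have hfj_eq : f j = e x0 := by
        apply Fin.ext; exact hfj.trans hx0
      by_cases hxx0 : x = x0
      · subst hxx0
        rw [hfj_eq]
        exact Finset.mem_insert.mpr (Or.inl (by simp))
      · apply Finset.mem_insert.mpr
        right
        -- x ∈ C (e x0) because x is adjacent to x0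
        have hlt : e x < e x0 := by
          have h1 : (e x : ℕ) ≤ M j := Finset.le_sup (f := fun x => ((e x : ℕ))) hx
          have h2 : e x ≠ e x0 := fun hc => hxx0 (e.injective hc)
          rw [Fin.lt_iff_val_lt_val]
          have h3 : (e x : ℕ) ≠ (e x0 : ℕ) := fun hc => h2 (Fin.ext hc)
          have h4 : M j = (e x0 : ℕ) := hx0
          omega
        have hadj : G.Adj x x0 := (hCp j hj).1.1 hx hx0C (by exact hxx0)
        have hbig0 : k + 1 ≤ ((e x0 : Fin n) : ℕ) := by rw [← hx0]; exact hsmall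
        have := ((hCp (e x0) hbig0).2.2 (e x) hlt).mp (by simpa using hadj)
        rw [hfj_eq]
        simpa using this
  let D : TreeDecomp G := {
    ι := Fin n
    T := parentGraph f
    conn := parentGraph_connected hf npos
    acyclic := parentGraph_acyclic hf0 hf
    bag := bag
    cover := by
      intro x
      refine ⟨e x, ?_⟩
      by_cases hsm : (e x : ℕ) < k + 1
      · rw [hbag_small _ hsm, mem_initClique]; exact hsm
      · rw [hbag_big _ (by omega)]
        exact Finset.mem_insert.mpr (Or.inl (by simp))
    edge_cover := by
      intro u w hadj
      have hne : e u ≠ e w := fun hc => hadj.ne (e.injective hc)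
      -- wlog by symmetry
      have main : ∀ u w : V, G.Adj u w → e u < e w → ∃ i, u ∈ bag i ∧ w ∈ bag i := by
        intro u w hadj hlt
        by_cases hsm : (e w : ℕ) < k + 1
        · refine ⟨e w, ?_, ?_⟩
          · rw [hbag_small _ hsm, mem_initClique]
            have := Fin.lt_iff_val_lt_val.mp hlt; omega
          · rw [hbag_small _ hsm, mem_initClique]; exact hsm
        · push_neg at hsm
          refine ⟨e w, ?_, ?_⟩
          · rw [hbag_big _ hsm]
            apply Finset.mem_insert.mpr
            right
            have := ((hCp (e w) hsm).2.2 (e u) hlt).mp (by simpa using hadj)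
            simpa using this
          · rw [hbag_big _ hsm]
            exact Finset.mem_insert.mpr (Or.inl (by simp))
      rcases lt_or_gt_of_ne hne with hlt | hlt
      · exact main u w hadj hlt
      · obtain ⟨i, h1, h2⟩ := main w u hadj.symm hlt
        exact ⟨i, h2, h1⟩
    bag_conn := by
      intro x
      by_cases hsm : (e x : ℕ) < k + 1
      · apply induce_connected_of_descent (r := ⟨0, npos⟩)
        · show x ∈ bag _
          rw [hbag_small _ (by exact (show (0:ℕ) < k + 1 by omega)), mem_initClique]
          exact hsm
        · intro j hjS hjne
          have hjval : (j : ℕ) ≠ 0 := fun hc => hjne (Fin.ext (by simp [hc]))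
          have hjS' : x ∈ bag j := hjS
          by_cases hjsm : (j : ℕ) < k + 1
          · refine ⟨⟨(j : ℕ) - 1, by have := j.2; omega⟩, ?_, ?_, ?_⟩
            · show x ∈ bag _
              rw [hbag_small _ (by exact (show (j:ℕ) - 1 < k + 1 by omega)), mem_initClique]
              exact hsm
            · rw [parentGraph_adj]
              constructor
              · intro hc
                have := congrArg Fin.val hc
                simp at this
                omega
              · left
                apply Fin.ext
                show (if (j : ℕ) < k + 1 then (j : ℕ) - 1 else M j) = _
                rw [if_pos hjsm]
            · rw [Fin.lt_iff_val_lt_val]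
              show (j : ℕ) - 1 < (j : ℕ)
              omega
          · push_neg at hjsm
            have hxj : x ∈ C j := by
              rw [hbag_big _ hjsm] at hjS'
              rcases Finset.mem_insert.mp hjS' with hc | hc
              · exfalso
                have : (e x : ℕ) = (j : ℕ) := by rw [hc]; simp
                omega
              · exact hc
            refine ⟨f j, hCbag j hjsm x hxj, ?_, hf j (by omega)⟩
            rw [parentGraph_adj]
            exact ⟨(ne_of_lt (hf j (by omega))).symm, Or.inl rfl⟩
      · push_neg at hsm
        apply induce_connected_of_descent (r := e x)
        · show x ∈ bag (e x)
          rw [hbag_big _ hsm]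
          exact Finset.mem_insert.mpr (Or.inl (by simp))
        · intro j hjS hjne
          have hjS' : x ∈ bag j := hjS
          by_cases hjsm : (j : ℕ) < k + 1
          · exfalso
            rw [hbag_small _ hjsm, mem_initClique] at hjS'
            omega
          · push_neg at hjsm
            have hxj : x ∈ C j := by
              rw [hbag_big _ hjsm] at hjS'
              rcases Finset.mem_insert.mp hjS' with hc | hc
              · exfalso
                apply hjne
                apply Fin.ext
                have : e x = j := by rw [hc]; simp
                rw [← this]
              · exact hc
            refine ⟨f j, hCbag j hjsm x hxj, ?_, hf j (by omega)⟩
            rw [parentGraph_adj]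
            exact ⟨(ne_of_lt (hf j (by omega))).symm, Or.inl rfl⟩ }
  apply treewidth_le G D
  intro i
  show (bag i).card ≤ k + 1
  by_cases hsm : (i : ℕ) < k + 1
  · rw [hbag_small _ hsm, initClique_card e hkn]
  · rw [hbag_big _ (by omega)]
    calc (insert (e.symm i) (C i)).card ≤ (C i).card + 1 := Finset.card_insert_le _ _
      _ = k + 1 := by rw [(hCp i (by omega)).1.2]

lemma card_filter_lt_fin {n : ℕ} (t : Fin n) :
    (Finset.univ.filter (fun i : Fin n => i < t)).card = (t : ℕ) := by
  classical
  have himg : (Finset.univ.filter (fun i : Fin n => i < t)).image Fin.val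
      = Finset.range (t : ℕ) := by
    ext m
    simp only [Finset.mem_image, Finset.mem_range, Finset.mem_filter, Finset.mem_univ, true_and]
    constructor
    · rintro ⟨i, hi, rfl⟩; exact Fin.lt_iff_val_lt_val.mp hi
    · intro hm
      have hmn : m < n := lt_trans hm t.2
      exact ⟨⟨m, hmn⟩, Fin.lt_iff_val_lt_val.mpr hm, rfl⟩
  have hinj : Set.InjOn Fin.val
      ((Finset.univ.filter (fun i : Fin n => i < t)) : Set (Fin n)) := fun a _ b _ hab => Fin.ext hab
  rw [← Finset.card_image_of_injOn hinj, himg, Finset.card_range]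

lemma treewidth_compl_le_master {V : Type} [Fintype V] {n : ℕ} (G : SimpleGraph V)
    (σ : Fin n ≃ V) (hn : 0 < n) (c : ℕ)
    (hW : ∀ t : Fin n, ∃ W : Finset V,
      (∀ y ∈ W, ∀ j : Fin n, t ≤ j → G.Adj y (σ j)) ∧ (t : ℕ) ≤ c + W.card) :
    treewidth Gᶜ ≤ c := by
  classical
  have hfval : ∀ t : Fin n, (t : ℕ) - 1 < n := fun t => by have := t.2; omega
  set f : Fin n → Fin n := fun t => ⟨(t : ℕ) - 1, hfval t⟩ with hf_def
  have hf0 : ∀ j, f j ≤ j := fun j => by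
    rw [Fin.le_iff_val_le_val]; show (j : ℕ) - 1 ≤ (j : ℕ); omega
  have hf : ∀ j : Fin n, (j : ℕ) ≠ 0 → f j < j := fun j hj => by
    rw [Fin.lt_iff_val_lt_val]; show (j : ℕ) - 1 < (j : ℕ); omega
  set P : Fin n → Finset (Fin n) := fun t => Finset.univ.filter
    (fun i : Fin n => i ≤ t ∧ (i = t ∨ ∃ j : Fin n, t ≤ j ∧ Gᶜ.Adj (σ i) (σ j))) with hP
  set bag : Fin n → Finset V := fun t => (P t).image σ with hbag
  have hmem : ∀ (v : V) (t : Fin n), v ∈ bag t ↔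
      (σ.symm v ≤ t ∧ (σ.symm v = t ∨ ∃ j : Fin n, t ≤ j ∧ Gᶜ.Adj v (σ j))) := by
    intro v t
    simp only [hbag, Finset.mem_image, hP, Finset.mem_filter, Finset.mem_univ, true_and]
    constructor
    · rintro ⟨i, ⟨h1, h2⟩, rfl⟩
      simp only [Equiv.symm_apply_apply]
      exact ⟨h1, h2⟩
    · rintro ⟨h1, h2⟩
      refine ⟨σ.symm v, ⟨h1, ?_⟩, by simp⟩
      rcases h2 with h2 | ⟨j, hj1, hj2⟩
      · exact Or.inl h2
      · exact Or.inr ⟨j, hj1, by simpa using hj2⟩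
  let D : TreeDecomp Gᶜ := {
    ι := Fin n
    T := parentGraph f
    conn := parentGraph_connected hf hn
    acyclic := parentGraph_acyclic hf0 hf
    bag := bag
    cover := by
      intro v
      refine ⟨σ.symm v, (hmem v _).mpr ⟨le_refl _, Or.inl rfl⟩⟩
    edge_cover := by
      intro a b hadj
      have hne : σ.symm a ≠ σ.symm b := fun hc => hadj.ne (by
        have := congrArg σ hc; simpa using this)
      have main : ∀ a b : V, Gᶜ.Adj a b → σ.symm a < σ.symm b →
          ∃ i, a ∈ bag i ∧ b ∈ bag i := by
        intro a b hadj hlt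
        refine ⟨σ.symm b, (hmem a _).mpr ⟨le_of_lt hlt, Or.inr ⟨σ.symm b, le_refl _, by
          simpa using hadj⟩⟩, (hmem b _).mpr ⟨le_refl _, Or.inl rfl⟩⟩
      rcases lt_or_gt_of_ne hne with hlt | hlt
      · exact main a b hadj hlt
      · obtain ⟨i, h1, h2⟩ := main b a hadj.symm hlt
        exact ⟨i, h2, h1⟩
    bag_conn := by
      intro v
      apply induce_connected_of_descent (r := σ.symm v)
      · show v ∈ bag _
        exact (hmem v _).mpr ⟨le_refl _, Or.inl rfl⟩
      · intro t htS htne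
        have ht : v ∈ bag t := htS
        rw [hmem] at ht
        obtain ⟨h1, h2⟩ := ht
        have hlt : σ.symm v < t := lt_of_le_of_ne h1 (fun hc => htne (hc ▸ rfl))
        have htpos : (t : ℕ) ≠ 0 := by
          intro hc
          have := Fin.lt_iff_val_lt_val.mp hlt
          omega
        rcases h2 with h2 | ⟨j, hj1, hj2⟩
        · exact absurd h2 (ne_of_lt hlt)
        refine ⟨f t, ?_, ?_, hf t htpos⟩
        · show v ∈ bag (f t)
          rw [hmem]
          constructor
          · rw [Fin.le_iff_val_le_val]
            show (σ.symm v : ℕ) ≤ (t : ℕ) - 1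
            have := Fin.lt_iff_val_lt_val.mp hlt
            omega
          · by_cases hc : σ.symm v = f t
            · exact Or.inl hc
            · refine Or.inr ⟨j, ?_, hj2⟩
              refine le_trans (le_of_lt (hf t htpos)) hj1
        · rw [parentGraph_adj]
          exact ⟨(ne_of_lt (hf t htpos)).symm, Or.inl rfl⟩ }
  apply treewidth_le _ D
  intro t
  show (bag t).card ≤ c + 1
  obtain ⟨W, hWadj, hWcard⟩ := hW t
  set Wpos : Finset (Fin n) := W.image σ.symm with hWpos
  have hWposcard : Wpos.card = W.card := Finset.card_image_of_injective _ σ.symm.injective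
  set A : Finset (Fin n) := Finset.univ.filter (fun i : Fin n => i < t) with hA
  have hWA : Wpos ⊆ A := by
    intro p hp
    obtain ⟨y, hy, rfl⟩ := Finset.mem_image.mp hp
    simp only [hA, Finset.mem_filter, Finset.mem_univ, true_and]
    by_contra hge
    push_neg at hge
    have := hWadj y hy (σ.symm y) hge
    rw [Equiv.apply_symm_apply] at this
    exact G.loopless.irrefl y this
  have hsub : P t ⊆ insert t (A \ Wpos) := by
    intro i hi
    simp only [hP, Finset.mem_filter, Finset.mem_univ, true_and] at hi
    obtain ⟨h1, h2⟩ := hi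
    by_cases hit : i = t
    · exact Finset.mem_insert.mpr (Or.inl hit)
    · apply Finset.mem_insert.mpr
      right
      rcases h2 with h2 | ⟨j, hj1, hj2⟩
      · exact absurd h2 hit
      refine Finset.mem_sdiff.mpr ⟨?_, ?_⟩
      · simp only [hA, Finset.mem_filter, Finset.mem_univ, true_and]
        exact lt_of_le_of_ne h1 hit
      · intro hmem'
        obtain ⟨y, hy, hyp⟩ := Finset.mem_image.mp hmem'
        have hyi : y = σ i := by
          have := congrArg σ hyp; simpa using this
        have := hWadj y hy j hj1
        rw [hyi] at this
        exact (hj2.2 : ¬ G.Adj (σ i) (σ j)) this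
  have hcard : (bag t).card ≤ (P t).card := Finset.card_image_le
  have h1 : (P t).card ≤ (A \ Wpos).card + 1 :=
    le_trans (Finset.card_le_card hsub) (Finset.card_insert_le _ _)
  have h2 : (A \ Wpos).card = A.card - Wpos.card := Finset.card_sdiff_of_subset hWA
  have h3 : A.card = (t : ℕ) := card_filter_lt_fin t
  have h4 : Wpos.card ≤ A.card := Finset.card_le_card hWA
  omega

lemma card_filter_ge_fin {n : ℕ} (t : Fin n) :
    (Finset.univ.filter (fun i : Fin n => t ≤ i)).card = n - (t : ℕ) := by
  classical
  have h := Finset.card_filter_add_card_filter_not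
    (s := (Finset.univ : Finset (Fin n))) (p := fun i : Fin n => i < t)
  have h2 : (Finset.univ.filter (fun i : Fin n => ¬ i < t)) =
      (Finset.univ.filter (fun i : Fin n => t ≤ i)) := by
    apply Finset.filter_congr
    intro i _
    simp [not_lt]
  rw [h2, card_filter_lt_fin t, Finset.card_univ, Fintype.card_fin] at h
  omega

lemma getElem_append_right' {α : Type} {P Q : List α} {i : ℕ} {h2 : i < (P ++ Q).length}
    (h : P.length ≤ i) (j : ℕ) (hj : i - P.length = j) (hjQ : j < Q.length) :
    (P ++ Q)[i]'h2 = Q[j]'hjQ := by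
  rw [List.getElem_append_right h]
  simp [hj]

lemma treewidth_compl_le_of_config {V : Type} [Fintype V] {k : ℕ} {G : SimpleGraph V}
    (B : Finset V) (hB : G.IsNClique (k+1) B)
    (d x : V) (hd : d ∈ B) (hx : x ∈ B) (hdx : d ≠ x)
    (w u : V) (hwB : w ∉ B) (huB : u ∉ B) (hwu : w ≠ u)
    (hwadj : ∀ z ∈ B, z ≠ d → G.Adj w z)
    (huadj : ∀ z ∈ B, z ≠ x → G.Adj u z)
    (hN : k + 3 ≤ Fintype.card V) :
    treewidth Gᶜ ≤ Fintype.card V - k - 2 := by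
  classical
  set N := Fintype.card V with hNdef
  have hn : 0 < N := by omega
  -- building blocks of the ordering
  set Bd : Finset V := B.erase d with hBd
  set Bdx : Finset V := Bd.erase x with hBdx
  have hxBd : x ∈ Bd := Finset.mem_erase.mpr ⟨hdx.symm, hx⟩
  have hBcard : B.card = k + 1 := hB.2
  have hBdcard : Bd.card = k := by rw [hBd, Finset.card_erase_of_mem hd, hBcard]; omega
  have hBdxcard : Bdx.card = k - 1 := by rw [hBdx, Finset.card_erase_of_mem hxBd, hBdcard]
  have hkpos : 1 ≤ k := by
    -- since d ≠ x and both in B, B.card ≥ 2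
    have : 2 ≤ B.card := Finset.one_lt_card.mpr ⟨d, hd, x, hx, hdx⟩
    omega
  have huBd : u ∉ Bd := fun hc => huB (Finset.mem_of_mem_erase hc)
  set S1 : Finset V := insert u Bd with hS1
  have hS1card : S1.card = k + 1 := by
    rw [hS1, Finset.card_insert_of_notMem huBd, hBdcard]
  set R : Finset V := S1ᶜ with hR
  have hRcard : R.card = N - (k+1) := by
    rw [hR, Finset.card_compl, hS1card]
  set L : List V := R.toList ++ u :: x :: Bdx.toList with hL
  have hlen : L.length = N := by
    simp only [hL, List.length_append, List.length_cons, Finset.length_toList]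
    rw [hRcard, hBdxcard]
    omega
  have hnodup : L.Nodup := by
    apply List.Nodup.append (Finset.nodup_toList _)
    · -- u :: x :: Bdx.toList nodup
      refine List.nodup_cons.mpr ⟨?_, List.nodup_cons.mpr ⟨?_, Finset.nodup_toList _⟩⟩
      · intro hc
        rcases List.mem_cons.mp hc with hc | hc
        · exact huB (by rw [hc]; exact hx)
        · exact huBd (Finset.mem_of_mem_erase ((Finset.mem_toList).mp hc))
      · intro hc
        exact (Finset.mem_erase.mp ((Finset.mem_toList).mp hc)).1 rfl
    · rw [List.disjoint_left]
      intro a ha hc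
      have haR : a ∈ R := (Finset.mem_toList).mp ha
      have haS1 : a ∉ S1 := Finset.mem_compl.mp haR
      rcases List.mem_cons.mp hc with rfl | hc
      · exact haS1 (Finset.mem_insert_self _ _)
      rcases List.mem_cons.mp hc with rfl | hc
      · exact haS1 (Finset.mem_insert.mpr (Or.inr hxBd))
      · exact haS1 (Finset.mem_insert.mpr (Or.inr (Finset.mem_of_mem_erase
          ((Finset.mem_toList).mp hc))))
  -- the ordering
  set g : Fin N → V := fun i => L.get (Fin.cast hlen.symm i) with hg
  have hginj : Function.Injective g := by
    intro a b hab
    have := List.nodup_iff_injective_get.mp hnodup hab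
    have := congrArg (Fin.cast hlen) this
    simpa using this
  have hgbij : Function.Bijective g :=
    (Fintype.bijective_iff_injective_and_card g).mpr ⟨hginj, by simp [hNdef]⟩
  set σ : Fin N ≃ V := Equiv.ofBijective g hgbij with hσ
  have hσ_app : ∀ i : Fin N, σ i = L.get (Fin.cast hlen.symm i) := fun i => rfl
  have hRlen : R.toList.length = N - (k+1) := by rw [Finset.length_toList, hRcard]
  -- suffix facts
  have hQlen : (u :: x :: Bdx.toList).length = k + 1 := by
    simp only [List.length_cons, Finset.length_toList, hBdxcard]
    omega
  have hF1 : ∀ i : Fin N, N - (k+1) ≤ (i : ℕ) → σ i = u ∨ σ i = x ∨ σ i ∈ Bdx := by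
    intro i hi
    rw [hσ_app, List.get_eq_getElem]
    have heq := getElem_append_right' (P := R.toList) (Q := u :: x :: Bdx.toList)
      (i := ((Fin.cast hlen.symm i : Fin L.length) : ℕ))
      (h2 := (Fin.cast hlen.symm i).2)
      (by simp only [Fin.coe_cast]; rw [hRlen]; exact hi)
      ((i : ℕ) - (N - (k+1)))
      (by simp only [Fin.coe_cast]; rw [hRlen])
      (by rw [hQlen]; have := i.2; omega)
    rw [heq]
    have hmem := List.getElem_mem (l := u :: x :: Bdx.toList)
      (n := (i : ℕ) - (N - (k+1))) (by rw [hQlen]; have := i.2; omega)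
    rcases List.mem_cons.mp hmem with hc | hc
    · exact Or.inl hc
    rcases List.mem_cons.mp hc with hc | hc
    · exact Or.inr (Or.inl hc)
    · exact Or.inr (Or.inr ((Finset.mem_toList).mp hc))
  have hupos : σ ⟨N - (k+1), by omega⟩ = u := by
    rw [hσ_app, List.get_eq_getElem]
    have heq := getElem_append_right' (P := R.toList) (Q := u :: x :: Bdx.toList)
      (i := ((Fin.cast hlen.symm (⟨N - (k+1), by omega⟩ : Fin N) : Fin L.length) : ℕ))
      (h2 := (Fin.cast hlen.symm (⟨N - (k+1), by omega⟩ : Fin N)).2)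
      (by simp only [Fin.coe_cast]; rw [hRlen]) 0
      (by simp only [Fin.coe_cast]; rw [hRlen]; omega)
      (by rw [hQlen]; omega)
    rw [heq]
    rfl
  have hxpos : σ ⟨N - k, by omega⟩ = x := by
    rw [hσ_app, List.get_eq_getElem]
    have heq := getElem_append_right' (P := R.toList) (Q := u :: x :: Bdx.toList)
      (i := ((Fin.cast hlen.symm (⟨N - k, by omega⟩ : Fin N) : Fin L.length) : ℕ))
      (h2 := (Fin.cast hlen.symm (⟨N - k, by omega⟩ : Fin N)).2)
      (by simp only [Fin.coe_cast]; rw [hRlen]; omega) 1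
      (by simp only [Fin.coe_cast]; rw [hRlen]; omega)
      (by rw [hQlen]; omega)
    rw [heq]
    rfl
  have hF2 : ∀ i : Fin N, N - k ≤ (i : ℕ) → σ i = x ∨ σ i ∈ Bdx := by
    intro i hi
    rcases hF1 i (by omega) with hc | hc
    · exfalso
      have : i = ⟨N - (k+1), by omega⟩ := σ.injective (by rw [hc, hupos])
      have := congrArg Fin.val this
      simp at this
      omega
    · exact hc
  have hF3 : ∀ i : Fin N, N - k + 1 ≤ (i : ℕ) → σ i ∈ Bdx := by
    intro i hi
    rcases hF2 i (by omega) with hc | hc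
    · exfalso
      have : i = ⟨N - k, by omega⟩ := σ.injective (by rw [hc, hxpos])
      have := congrArg Fin.val this
      simp at this
      omega
    · exact hc
  -- apply the master lemma
  apply treewidth_compl_le_master G σ hn (N - k - 2)
  intro t
  by_cases hcase1 : (t : ℕ) ≤ N - k - 2
  · exact ⟨∅, by simp, by simpa using hcase1⟩
  push_neg at hcase1
  by_cases hcase2 : (t : ℕ) = N - k - 1
  · -- W = {d}
    refine ⟨{d}, ?_, by simp; omega⟩
    intro y hy j hj
    rw [Finset.mem_singleton.mp hy]
    have hj' : N - (k+1) ≤ (j : ℕ) := by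
      have := Fin.le_iff_val_le_val.mp hj
      omega
    rcases hF1 j hj' with hc | hc | hc
    · rw [hc]; exact (huadj d hd hdx).symm
    · rw [hc]; exact hB.1 hd hx hdx
    · have hzB : σ j ∈ B := Finset.mem_of_mem_erase (Finset.mem_of_mem_erase hc)
      have hzd : σ j ≠ d := by
        intro hzd
        exact (Finset.mem_erase.mp (Finset.mem_of_mem_erase hc)).1 hzd
      exact hB.1 hd hzB (Ne.symm hzd)
  by_cases hcase3 : (t : ℕ) = N - k
  · -- W = {d, w}
    have hdw : d ≠ w := fun hc => hwB (hc ▸ hd)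
    refine ⟨{d, w}, ?_, ?_⟩
    · intro y hy j hj
      have hj' : N - k ≤ (j : ℕ) := by
        have := Fin.le_iff_val_le_val.mp hj
        omega
      have hzBd : σ j ∈ Bd := by
        rcases hF2 j hj' with hc | hc
        · rw [hc]; exact hxBd
        · exact Finset.mem_of_mem_erase hc
      have hzB : σ j ∈ B := Finset.mem_of_mem_erase hzBd
      have hzd : σ j ≠ d := (Finset.mem_erase.mp hzBd).1
      rcases Finset.mem_insert.mp hy with hyd | hy
      · rw [hyd]; exact hB.1 hd hzB (Ne.symm hzd)
      · rw [Finset.mem_singleton.mp hy]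
        exact hwadj (σ j) hzB hzd
    · have : ({d, w} : Finset V).card = 2 := Finset.card_pair hdw
      rw [this]
      omega
  · -- t ≥ N - k + 1 : W = insert d (insert u (Bd.filter (pos < t)))
    have ht : N - k + 1 ≤ (t : ℕ) := by omega
    set F : Finset V := Bd.filter (fun z => (σ.symm z : Fin N) < t) with hF
    have hdF : d ∉ insert u F := by
      intro hc
      rcases Finset.mem_insert.mp hc with hc | hc
      · exact huB (hc ▸ hd)
      · exact (Finset.mem_erase.mp (Finset.mem_filter.mp hc).1).1 rfl
    have huF : u ∉ F := fun hc => huBd (Finset.mem_filter.mp hc).1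
    refine ⟨insert d (insert u F), ?_, ?_⟩
    · intro y hy j hj
      have hj' : N - k + 1 ≤ (j : ℕ) := le_trans ht (Fin.le_iff_val_le_val.mp hj)
      have hz := hF3 j hj'
      have hzBd : σ j ∈ Bd := Finset.mem_of_mem_erase hz
      have hzB : σ j ∈ B := Finset.mem_of_mem_erase hzBd
      have hzd : σ j ≠ d := (Finset.mem_erase.mp hzBd).1
      have hzx : σ j ≠ x := (Finset.mem_erase.mp hz).1
      rcases Finset.mem_insert.mp hy with hyd | hy
      · rw [hyd]; exact hB.1 hd hzB (Ne.symm hzd)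
      rcases Finset.mem_insert.mp hy with hyu | hy
      · rw [hyu]; exact huadj (σ j) hzB hzx
      · -- y ∈ F
        obtain ⟨hyBd, hylt⟩ := Finset.mem_filter.mp hy
        have hyB : y ∈ B := Finset.mem_of_mem_erase hyBd
        have hyne : y ≠ σ j := by
          intro hc
          rw [hc] at hylt
          simp only [Equiv.symm_apply_apply] at hylt
          have h1 := Fin.lt_iff_val_lt_val.mp hylt
          have h2 := Fin.le_iff_val_le_val.mp hj
          omega
        exact hB.1 hyB hzB hyne
    · -- cardinality
      have hcard1 : (insert d (insert u F)).card = F.card + 2 := by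
        rw [Finset.card_insert_of_notMem hdF, Finset.card_insert_of_notMem huF]
      -- |Bd \ F| ≤ N - t
      have hcard2 : (Bd.filter (fun z => ¬ ((σ.symm z : Fin N) < t))).card ≤ N - (t : ℕ) := by
        rw [← card_filter_ge_fin t]
        apply Finset.card_le_card_of_injOn (fun z => σ.symm z)
        · intro z hz
          simp only [Finset.mem_filter, Finset.mem_univ, true_and]
          exact Finset.mem_coe.mpr (Finset.mem_filter.mpr ⟨Finset.mem_univ _, not_lt.mp (Finset.mem_filter.mp hz).2⟩)
        · intro a _ b _ hab
          have := congrArg σ hab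
          simpa using this
      have hcard3 := Finset.card_filter_add_card_filter_not
        (s := Bd) (p := fun z => (σ.symm z : Fin N) < t)
      rw [hBdcard] at hcard3
      rw [← hF] at hcard3
      have htN := t.2
      omega

lemma pair_induce_connected {V : Type} (H : SimpleGraph V) {a b : V} (h : H.Adj a b) :
    (H.induce ({a, b} : Set V)).Connected := by
  rw [connected_iff]
  have haS : a ∈ ({a, b} : Set V) := Or.inl rfl
  have hbS : b ∈ ({a, b} : Set V) := Or.inr rfl
  refine ⟨fun x y => ?_, ⟨⟨a, haS⟩⟩⟩
  have hreach : ∀ (z : V) (hz : z ∈ ({a, b} : Set V)),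
      (H.induce ({a, b} : Set V)).Reachable ⟨z, hz⟩ ⟨a, haS⟩ := by
    intro z hz
    have hz' : z = a ∨ z = b := hz
    rcases hz' with hz' | hz'
    · have hEq : (⟨z, hz⟩ : ↥({a, b} : Set V)) = ⟨a, haS⟩ := Subtype.ext hz'
      rw [hEq]
    · have hadj : (H.induce ({a, b} : Set V)).Adj ⟨z, hz⟩ ⟨a, haS⟩ := by
        show H.Adj z a
        rw [hz']
        exact h.symm
      exact hadj.reachable
  exact (hreach x.1 x.2).trans (hreach y.1 y.2).symm

lemma iso_of_char {V : Type} [Fintype V] {k : ℕ} (G : SimpleGraph V) (E : Finset V)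
    (hEcard : E.card = k)
    (hchar : ∀ u w : V, G.Adj u w ↔ u ≠ w ∧ (u ∈ E ∨ w ∈ E)) :
    Nonempty (G ≃g QGraph (Fintype.card V) k) := by
  classical
  set N := Fintype.card V with hN
  set L : List V := E.toList ++ Eᶜ.toList with hL
  have hlen : L.length = N := by
    simp only [hL, List.length_append, Finset.length_toList]
    rw [Finset.card_compl, hEcard]
    have : E.card ≤ N := Finset.card_le_univ E
    rw [hEcard] at this
    omega
  have hElen : E.toList.length = k := by rw [Finset.length_toList, hEcard]
  have hnodup : L.Nodup := by
    apply List.Nodup.append (Finset.nodup_toList _) (Finset.nodup_toList _)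
    rw [List.disjoint_left]
    intro a ha hc
    exact (Finset.mem_compl.mp ((Finset.mem_toList).mp hc)) ((Finset.mem_toList).mp ha)
  set g : Fin N → V := fun i => L.get (Fin.cast hlen.symm i) with hg
  have hginj : Function.Injective g := by
    intro a b hab
    have := List.nodup_iff_injective_get.mp hnodup hab
    have := congrArg (Fin.cast hlen) this
    simpa using this
  have hgbij : Function.Bijective g :=
    (Fintype.bijective_iff_injective_and_card g).mpr ⟨hginj, by simp [hN]⟩
  set ψ : Fin N ≃ V := Equiv.ofBijective g hgbij with hψ
  have hψ_app : ∀ i : Fin N, ψ i = L.get (Fin.cast hlen.symm i) := fun i => rfl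
  -- membership characterization
  have hmemE : ∀ i : Fin N, ψ i ∈ E ↔ (i : ℕ) < k := by
    intro i
    constructor
    · intro hmem
      by_contra hge
      push_neg at hge
      have : ψ i ∈ Eᶜ := by
        rw [hψ_app, List.get_eq_getElem]
        have heq := getElem_append_right' (P := E.toList) (Q := Eᶜ.toList)
          (i := ((Fin.cast hlen.symm i : Fin L.length) : ℕ))
          (h2 := (Fin.cast hlen.symm i).2)
          (by simp only [Fin.coe_cast]; rw [hElen]; exact hge)
          ((i : ℕ) - k)
          (by simp only [Fin.coe_cast]; rw [hElen])
          (by rw [Finset.length_toList, Finset.card_compl, hEcard]; have := i.2; omega)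
        rw [heq]
        exact (Finset.mem_toList).mp (List.getElem_mem _)
      exact (Finset.mem_compl.mp this) hmem
    · intro hlt
      rw [hψ_app, List.get_eq_getElem]
      have heq : L[((Fin.cast hlen.symm i : Fin L.length) : ℕ)] = E.toList[(i : ℕ)]'(by
          rw [hElen]; exact hlt) := by
        apply List.getElem_append_left
      rw [heq]
      exact (Finset.mem_toList).mp (List.getElem_mem _)
  refine ⟨⟨ψ.symm, ?_⟩⟩
  intro u w
  show (QGraph N k).Adj (ψ.symm u) (ψ.symm w) ↔ G.Adj u w
  have hu : ψ (ψ.symm u) = u := ψ.apply_symm_apply u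
  have hw : ψ (ψ.symm w) = w := ψ.apply_symm_apply w
  constructor
  · rintro ⟨hne, hor⟩
    rw [hchar]
    constructor
    · intro hc; exact hne (by rw [hc])
    · rcases hor with hlt | hlt
      · left; rw [← hu]; exact (hmemE _).mpr hlt
      · right; rw [← hw]; exact (hmemE _).mpr hlt
  · intro hadj
    rw [hchar] at hadj
    obtain ⟨hne, hor⟩ := hadj
    constructor
    · intro hc; exact hne (by rw [← hu, ← hw, hc])
    · rcases hor with hmem | hmem
      · left; exact (hmemE _).mp (by rw [hu]; exact hmem)
      · right; exact (hmemE _).mp (by rw [hw]; exact hmem)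

lemma char_of_uniform {V : Type} [Fintype V] {k n : ℕ} {G : SimpleGraph V} (e : V ≃ Fin n)
    (hkn : k + 1 ≤ n)
    (hbase : ∀ i j : Fin n, i < j → (j : ℕ) < k + 1 → G.Adj (e.symm i) (e.symm j))
    (E : Finset V) (hEsmall : ∀ z ∈ E, (e z : ℕ) < k + 1) (hEcard : E.card = k)
    (hbig : ∀ j : Fin n, k + 1 ≤ (j : ℕ) →
      ∀ i : Fin n, i < j → (G.Adj (e.symm i) (e.symm j) ↔ e.symm i ∈ E)) :
    ∀ u w : V, G.Adj u w ↔ u ≠ w ∧ (u ∈ E ∨ w ∈ E) := by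
  classical
  have hEsub : E ⊆ initClique e k := fun z hz => mem_initClique.mpr (hEsmall z hz)
  have hSmE : ((initClique e k) \ E).card = 1 := by
    rw [Finset.card_sdiff_of_subset hEsub, initClique_card e hkn, hEcard]
    omega
  have main : ∀ u w : V, e u < e w → (G.Adj u w ↔ u ≠ w ∧ (u ∈ E ∨ w ∈ E)) := by
    intro u w hlt
    have hne : u ≠ w := by
      intro hc; subst hc; exact lt_irrefl _ hlt
    by_cases hsm : (e w : ℕ) < k + 1
    · -- both small: adjacency holds, and one of them is in E
      have hadj : G.Adj u w := by
        have := hbase (e u) (e w) hlt hsm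
        simpa using this
      have husm : (e u : ℕ) < k + 1 := by
        have := Fin.lt_iff_val_lt_val.mp hlt; omega
      have honeE : u ∈ E ∨ w ∈ E := by
        by_contra hcon
        push_neg at hcon
        have hu' : u ∈ initClique e k \ E :=
          Finset.mem_sdiff.mpr ⟨mem_initClique.mpr husm, hcon.1⟩
        have hw' : w ∈ initClique e k \ E :=
          Finset.mem_sdiff.mpr ⟨mem_initClique.mpr hsm, hcon.2⟩
        have := Finset.one_lt_card.mpr ⟨u, hu', w, hw', hne⟩
        omega
      exact ⟨fun _ => ⟨hne, honeE⟩, fun _ => hadj⟩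
    · push_neg at hsm
      have hiff := hbig (e w) hsm (e u) hlt
      simp only [Equiv.symm_apply_apply] at hiff
      rw [hiff]
      constructor
      · intro huE
        exact ⟨hne, Or.inl huE⟩
      · rintro ⟨_, huE | hwE⟩
        · exact huE
        · exfalso
          have := hEsmall w hwE
          omega
  intro u w
  by_cases huw : u = w
  · subst huw
    simp only [SimpleGraph.irrefl, false_iff]
    intro hc
    exact hc.1 rfl
  · have hne' : e u ≠ e w := fun hc => huw (e.injective hc)
    rcases lt_or_gt_of_ne hne' with hlt | hlt
    · exact main u w hlt
    · rw [adj_comm]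
      rw [main w u hlt]
      constructor
      · rintro ⟨h1, h2⟩; exact ⟨Ne.symm h1, h2.symm⟩
      · rintro ⟨h1, h2⟩; exact ⟨Ne.symm h1, h2.symm⟩

lemma uniform_or_config {V : Type} [Fintype V] {k n : ℕ} {G : SimpleGraph V} (e : V ≃ Fin n)
    (hkn : k + 2 ≤ n)
    (hbase : ∀ i j : Fin n, i < j → (j : ℕ) < k + 1 → G.Adj (e.symm i) (e.symm j))
    (C : Fin n → Finset V)
    (hCp : ∀ j : Fin n, k + 1 ≤ (j : ℕ) →
      G.IsNClique k (C j) ∧ (∀ x ∈ C j, ((e x : ℕ) < (j : ℕ))) ∧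
        ∀ i : Fin n, i < j → (G.Adj (e.symm i) (e.symm j) ↔ e.symm i ∈ C j))
    (hnoconf : ¬ ∃ (B : Finset V) (d x w u : V), G.IsNClique (k+1) B ∧ d ∈ B ∧ x ∈ B ∧
      d ≠ x ∧ w ∉ B ∧ u ∉ B ∧ (∀ z ∈ B, z ≠ d → G.Adj w z) ∧ (∀ z ∈ B, z ≠ x → G.Adj u z)) :
    ∀ j : Fin n, k + 1 ≤ (j : ℕ) → C j = C (⟨k + 1, by omega⟩ : Fin n) := by
  classical
  set jk : Fin n := ⟨k + 1, by omega⟩ with hjk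
  set E : Finset V := C jk with hE
  have hjkval : (jk : ℕ) = k + 1 := rfl
  have hjkbig : k + 1 ≤ (jk : ℕ) := le_of_eq hjkval.symm
  obtain ⟨hEclique, hEidx, hEiff⟩ := hCp jk hjkbig
  have hEcard : E.card = k := hEclique.2
  have hEsmall : ∀ z ∈ E, (e z : ℕ) < k + 1 := by
    intro z hz
    have := hEidx z hz
    omega
  set Sm : Finset V := initClique e k with hSm
  have hSmcard : Sm.card = k + 1 := initClique_card e (by omega)
  have hSmclique : G.IsClique ↑Sm := initClique_isClique e hbase
  have hEsub : E ⊆ Sm := fun z hz => mem_initClique.mpr (hEsmall z hz)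
  have hSmE : (Sm \ E).card = 1 := by
    rw [Finset.card_sdiff_of_subset hEsub, hSmcard, hEcard]; omega
  obtain ⟨d0, hd0⟩ := Finset.card_eq_one.mp hSmE
  have hd0Sm : d0 ∈ Sm := by
    have : d0 ∈ Sm \ E := hd0 ▸ Finset.mem_singleton_self d0
    exact (Finset.mem_sdiff.mp this).1
  have hd0E : d0 ∉ E := by
    have : d0 ∈ Sm \ E := hd0 ▸ Finset.mem_singleton_self d0
    exact (Finset.mem_sdiff.mp this).2
  have hSmerase : Sm.erase d0 = E := by
    refine (Finset.eq_of_subset_of_card_le ?_ ?_).symm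
    · intro z hz
      refine Finset.mem_erase.mpr ⟨?_, hEsub hz⟩
      intro hc; exact hd0E (hc ▸ hz)
    · rw [Finset.card_erase_of_mem hd0Sm, hSmcard, hEcard]; omega
  set w0 : V := e.symm jk with hw0
  have hw0Sm : w0 ∉ Sm := by
    rw [hSm, mem_initClique]
    simp only [hw0, Equiv.apply_symm_apply]
    omega
  have hw0adj : ∀ z ∈ E, G.Adj w0 z := by
    intro z hz
    have hltz : e z < jk := by
      rw [Fin.lt_iff_val_lt_val, hjkval]
      exact hEsmall z hz
    have := (hEiff (e z) hltz).mpr (by simpa using hz)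
    simpa using this.symm
  -- unique non-E element of Sm is d0
  have hmemE_of : ∀ z ∈ Sm, z ≠ d0 → z ∈ E := by
    intro z hz hzd
    rw [← hSmerase]
    exact Finset.mem_erase.mpr ⟨hzd, hz⟩
  have main : ∀ jv : ℕ, ∀ j : Fin n, (j : ℕ) = jv → k + 1 ≤ (j : ℕ) → C j = E := by
    intro jv
    induction jv using Nat.strong_induction_on with
    | _ jv ih =>
      intro j hjv hj
      by_cases hjk1 : (j : ℕ) = k + 1
      · have : j = jk := Fin.ext (by rw [hjkval]; exact hjk1)
        rw [this]
      have hj2 : k + 2 ≤ (j : ℕ) := by omega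
      by_contra hne
      apply hnoconf
      obtain ⟨hCjclique, hCjidx, hCjiff⟩ := hCp j (by omega)
      have hCjcard : (C j).card = k := hCjclique.2
      have hvj : (e (e.symm j) : ℕ) = (j : ℕ) := by simp
      have hvjB : ∀ (B' : Finset V), (∀ z ∈ B', (e z : ℕ) < (j : ℕ)) → e.symm j ∉ B' := by
        intro B' hB' hc
        have := hB' _ hc
        omega
      have huCj : ∀ z ∈ C j, G.Adj (e.symm j) z := by
        intro z hz
        have hltz : e z < j := Fin.lt_iff_val_lt_val.mpr (hCjidx z hz)
        have := (hCjiff (e z) hltz).mpr (by simpa using hz)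
        simpa using this.symm
      by_cases hcase : ∀ z ∈ C j, (e z : ℕ) < k + 1
      · -- Case A : C j ⊆ Sm
        have hCjSm : C j ⊆ Sm := fun z hz => mem_initClique.mpr (hcase z hz)
        have hxex : ∃ x ∈ E, x ∉ C j := by
          by_contra hcon
          push_neg at hcon
          have := Finset.eq_of_subset_of_card_le hcon (by omega)
          exact hne this.symm
        obtain ⟨x, hxE, hxCj⟩ := hxex
        have hSmx : Sm.erase x = C j := by
          refine (Finset.eq_of_subset_of_card_le ?_ ?_).symm
          · intro z hz
            refine Finset.mem_erase.mpr ⟨?_, hCjSm hz⟩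
            intro hc; exact hxCj (hc ▸ hz)
          · rw [Finset.card_erase_of_mem (hEsub hxE), hSmcard, hCjcard]; omega
        refine ⟨Sm, d0, x, w0, e.symm j, ⟨hSmclique, hSmcard⟩, hd0Sm, hEsub hxE, ?_, hw0Sm,
          ?_, ?_, ?_⟩
        · intro hc; exact hd0E (hc ▸ hxE)
        · -- e.symm j ∉ Sm
          intro hc
          rw [hSm, mem_initClique] at hc
          omega
        · intro z hz hzd
          exact hw0adj z (hmemE_of z hz hzd)
        · intro z hz hzx
          have : z ∈ C j := by
            rw [← hSmx]; exact Finset.mem_erase.mpr ⟨hzx, hz⟩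
          exact huCj z this
      · -- Case B : some big vertex in C j
        push_neg at hcase
        obtain ⟨y, hyCj, hybig⟩ := hcase
        have hiltj : e y < j := Fin.lt_iff_val_lt_val.mpr (hCjidx y hyCj)
        have hCiE : C (e y) = E :=
          ih (e y : ℕ) (by rw [← hjv]; exact Fin.lt_iff_val_lt_val.mp hiltj) (e y) rfl hybig
        obtain ⟨_, _, hCiiff⟩ := hCp (e y) hybig
        have hyE : ∀ z ∈ E, G.Adj y z := by
          intro z hz
          have hltz : e z < e y := by
            rw [Fin.lt_iff_val_lt_val]
            have := hEsmall z hz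
            omega
          have := (hCiiff (e z) hltz).mpr (by rw [hCiE]; simpa using hz)
          simp only [Equiv.symm_apply_apply] at this
          exact this.symm
        have hyEn : y ∉ E := fun hc => by have := hEsmall y hc; omega
        have hCjsub : ∀ z ∈ C j, z ≠ y → z ∈ E := by
          intro z hz hzy
          have hadjzy : G.Adj z y := hCjclique.1 hz hyCj hzy
          have hnez : e z ≠ e y := fun hc => hzy (e.injective hc)
          rcases lt_or_gt_of_ne hnez with hlt | hlt
          · have := (hCiiff (e z) hlt).mp (by simpa using hadjzy)
            rw [hCiE] at this
            simpa using this
          · -- e z > e y : z is big too, C (e z) = E, y ∈ E: contradiction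
            exfalso
            have hzbig : k + 1 ≤ (e z : ℕ) := by
              have := Fin.lt_iff_val_lt_val.mp hlt
              omega
            have hzltj : e z < j := Fin.lt_iff_val_lt_val.mpr (hCjidx z hz)
            have hCzE : C (e z) = E :=
              ih (e z : ℕ) (by rw [← hjv]; exact Fin.lt_iff_val_lt_val.mp hzltj) (e z) rfl hzbig
            obtain ⟨_, _, hCziff⟩ := hCp (e z) hzbig
            have := (hCziff (e y) hlt).mp (by simpa using hadjzy.symm)
            rw [hCzE] at this
            simp only [Equiv.symm_apply_apply] at this
            exact hyEn this
        have hxex : ∃ x ∈ E, x ∉ C j := by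
          by_contra hcon
          push_neg at hcon
          have heq := Finset.eq_of_subset_of_card_le hcon (by omega)
          rw [heq] at hyEn
          exact hyEn hyCj
        obtain ⟨x, hxE, hxCj⟩ := hxex
        have hxy : x ≠ y := fun hc => hyEn (hc ▸ hxE)
        have hkpos : 1 ≤ k := by
          have : 0 < E.card := Finset.card_pos.mpr ⟨x, hxE⟩
          omega
        have hCjeq : insert y (E.erase x) = C j := by
          refine (Finset.eq_of_subset_of_card_le ?_ ?_).symm
          · intro z hz
            by_cases hzy : z = y
            · rw [hzy]; exact Finset.mem_insert_self _ _
            · refine Finset.mem_insert.mpr (Or.inr (Finset.mem_erase.mpr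
                ⟨fun hc => hxCj (hc ▸ hz), hCjsub z hz hzy⟩))
          · calc (insert y (E.erase x)).card ≤ (E.erase x).card + 1 := Finset.card_insert_le _ _
              _ ≤ (C j).card := by
                  rw [Finset.card_erase_of_mem hxE, hEcard, hCjcard]
                  omega
        have hBclique : G.IsClique ↑(insert y E) := by
          intro a ha b hb hab
          simp only [Finset.coe_insert, Set.mem_insert_iff, Finset.mem_coe] at ha hb
          rcases ha with rfl | ha <;> rcases hb with rfl | hb
          · exact absurd rfl hab
          · exact hyE b hb
          · exact (hyE a ha).symm
          · exact hEclique.1 ha hb hab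
        have hBcard : (insert y E).card = k + 1 := by
          rw [Finset.card_insert_of_notMem hyEn, hEcard]
        have hd0y : d0 ≠ y := by
          intro hc
          have h1 : (e d0 : ℕ) < k + 1 := mem_initClique.mp hd0Sm
          rw [hc] at h1
          omega
        refine ⟨insert y E, y, x, d0, e.symm j, ⟨hBclique, hBcard⟩,
          Finset.mem_insert_self _ _, Finset.mem_insert.mpr (Or.inr hxE), hxy.symm, ?_, ?_, ?_, ?_⟩
        · intro hc
          rcases Finset.mem_insert.mp hc with hc | hc
          · exact hd0y hc
          · exact hd0E hc
        · intro hc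
          rcases Finset.mem_insert.mp hc with hc | hc
          · have : (j : ℕ) = (e y : ℕ) := by
              have := congrArg (fun z => (e z : ℕ)) hc
              simpa using this
            have := Fin.lt_iff_val_lt_val.mp hiltj
            omega
          · have := hEsmall _ hc
            simp only [Equiv.apply_symm_apply] at this
            omega
        · intro z hz hzy
          have hzE : z ∈ E := by
            rcases Finset.mem_insert.mp hz with hc | hc
            · exact absurd hc hzy
            · exact hc
          have hd0z : d0 ≠ z := fun hc => hd0E (hc ▸ hzE)
          exact hSmclique (Finset.mem_coe.mpr hd0Sm) (Finset.mem_coe.mpr (hEsub hzE)) hd0z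
        · intro z hz hzx
          have : z ∈ C j := by
            rw [← hCjeq]
            rcases Finset.mem_insert.mp hz with hc | hc
            · rw [hc]; exact Finset.mem_insert_self _ _
            · exact Finset.mem_insert.mpr (Or.inr (Finset.mem_erase.mpr ⟨hzx, hc⟩))
          exact huCj z this
  intro j hj
  exact main (j : ℕ) j rfl hj

theorem kTree_nordhaus_gaddum_exact {V : Type} [Fintype V] (k : ℕ) (G : SimpleGraph V)
    (h : IsKTree k G) (hiso : IsEmpty (G ≃g QGraph (Fintype.card V) k)) :
    treewidth G + treewidth Gᶜ = Fintype.card V - 2 := by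
  classical
  obtain ⟨n, e, hkn, hbase, hC⟩ := h
  have hcardV : Fintype.card V = n := by
    rw [← Fintype.card_fin n]; exact Fintype.card_congr e
  have hnpos : 0 < n := by omega
  haveI : Nonempty V := by
    rw [← Fintype.card_pos_iff, hcardV]; exact hnpos
  have hC' : ∀ j : Fin n, ∃ Cj : Finset V, k + 1 ≤ (j : ℕ) →
      (G.IsNClique k Cj ∧ (∀ x ∈ Cj, ((e x : ℕ) < (j : ℕ))) ∧
        ∀ i : Fin n, i < j → (G.Adj (e.symm i) (e.symm j) ↔ e.symm i ∈ Cj)) := by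
    intro j
    by_cases hj : k + 1 ≤ (j : ℕ)
    · obtain ⟨Cj, h1, h2, h3⟩ := hC j hj
      exact ⟨Cj, fun _ => ⟨h1, h2, h3⟩⟩
    · exact ⟨∅, fun hj' => absurd hj' hj⟩
  choose C hCp using hC'
  have hclique_le : ∀ W : Finset V, G.IsClique ↑W → W.card ≤ k + 1 :=
    kTree_clique_card_le e hC
  by_cases hP : ∃ (B : Finset V) (d x w u : V), G.IsNClique (k+1) B ∧ d ∈ B ∧ x ∈ B ∧
      d ≠ x ∧ w ∉ B ∧ u ∉ B ∧ (∀ z ∈ B, z ≠ d → G.Adj w z) ∧ (∀ z ∈ B, z ≠ x → G.Adj u z)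
  · -- main case
    obtain ⟨B, d, x, w, u, hB, hd, hx, hdx, hwB, huB, hwadj, huadj⟩ := hP
    have hwu : w ≠ u := by
      intro hc
      have hclq : G.IsClique ↑(insert w B) := by
        intro p hp q hq hpq
        simp only [Finset.coe_insert, Set.mem_insert_iff, Finset.mem_coe] at hp hq
        rcases hp with rfl | hp <;> rcases hq with rfl | hq
        · exact absurd rfl hpq
        · by_cases hqd : q = d
          · rw [hc]
            exact huadj q hq (by rw [hqd]; exact hdx)
          · exact hwadj q hq hqd
        · by_cases hpd : p = d
          · rw [hc]
            exact (huadj p hp (by rw [hpd]; exact hdx)).symm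
          · exact (hwadj p hp hpd).symm
        · exact hB.1 hp hq hpq
      have hcard := hclique_le (insert w B) hclq
      rw [Finset.card_insert_of_notMem hwB, hB.2] at hcard
      omega
    have hNk3 : k + 3 ≤ Fintype.card V := by
      have hwun : w ∉ insert u B := by
        intro hc
        rcases Finset.mem_insert.mp hc with hc | hc
        · exact hwu hc
        · exact hwB hc
      have hcard : (insert w (insert u B)).card = k + 3 := by
        rw [Finset.card_insert_of_notMem hwun, Finset.card_insert_of_notMem huB, hB.2]
      calc k + 3 = (insert w (insert u B)).card := hcard.symm
        _ ≤ Fintype.card V := Finset.card_le_univ _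
    have h1 : treewidth G ≤ k := kTree_treewidth_le e hkn hbase hC
    have h2 : k ≤ treewidth G := by
      have hne : (initClique e k).Nonempty := by
        rw [← Finset.card_pos, initClique_card e hkn]; omega
      have := le_treewidth_of_clique (G := G) (initClique e k)
        (initClique_isClique e hbase) hne
      rw [initClique_card e hkn] at this
      simpa using this
    have h3 : treewidth Gᶜ ≤ Fintype.card V - k - 2 :=
      treewidth_compl_le_of_config B hB d x hd hx hdx w u hwB huB hwu hwadj huadj hNk3
    have h4 : Fintype.card V - k - 2 ≤ treewidth Gᶜ := by
      apply le_treewidth_of_bramble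
        (𝓑 := {S : Set V | ∃ a b : V, Gᶜ.Adj a b ∧ S = {a, b}})
      · constructor
        · rintro A ⟨a, b, hab, rfl⟩
          exact pair_induce_connected Gᶜ hab
        · rintro A ⟨a, b, hab, rfl⟩ A' ⟨a', b', hab', rfl⟩
          by_contra hT
          rw [Touch] at hT
          push_neg at hT
          obtain ⟨hint, hedge⟩ := hT
          have hmem : ∀ p : V, p ∈ ({a, b} : Set V) → ∀ q : V, q ∈ ({a', b'} : Set V) →
              p ≠ q ∧ G.Adj p q := by
            intro p hp q hq
            have hne : p ≠ q := by
              intro hc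
              apply Set.not_nonempty_empty
              rw [← hint]
              exact ⟨p, hp, by rw [hc]; exact hq⟩
            refine ⟨hne, ?_⟩
            by_contra hna
            exact hedge p hp q hq ((compl_adj G p q).mpr ⟨hne, hna⟩)
          have haS : a ∈ ({a, b} : Set V) := Or.inl rfl
          have hbS : b ∈ ({a, b} : Set V) := Or.inr rfl
          have haS' : a' ∈ ({a', b'} : Set V) := Or.inl rfl
          have hbS' : b' ∈ ({a', b'} : Set V) := Or.inr rfl
          have hC4 : HasInducedC4 G := by
            refine ⟨a, a', b, b', (compl_adj G a b).mp hab |>.1, (compl_adj G a' b').mp hab' |>.1,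
              (hmem a haS a' haS').2, ((hmem b hbS a' haS').2).symm,
              (hmem b hbS b' hbS').2, ((hmem a haS b' hbS').2).symm,
              ((compl_adj G a b).mp hab).2, ((compl_adj G a' b').mp hab').2⟩
          exact kTree_no_C4 e hbase hC hC4
      · intro S hS
        have hclq : G.IsClique ↑(Sᶜ : Finset V) := by
          intro p hp q hq hpq
          simp only [Finset.coe_compl, Set.mem_compl_iff, Finset.mem_coe] at hp hq
          by_contra hna
          have hadj : Gᶜ.Adj p q := (compl_adj G p q).mpr ⟨hpq, hna⟩
          obtain ⟨v, hv1, hv2⟩ := hS {p, q} ⟨p, q, hadj, rfl⟩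
          rcases hv1 with rfl | rfl
          · exact hp hv2
          · exact hq hv2
        have hcard := hclique_le Sᶜ hclq
        rw [Finset.card_compl] at hcard
        have := Finset.card_le_univ S
        omega
    have hfinal1 : treewidth G = k := le_antisymm h1 h2
    have hfinal2 : treewidth Gᶜ = Fintype.card V - k - 2 := le_antisymm h3 h4
    rw [hfinal1, hfinal2]
    omega
  · -- no configuration: G is isomorphic to QGraph, contradiction
    exfalso
    apply hiso.false
    by_cases hn1 : n = k + 1
    · -- complete graph case
      set top : V := e.symm (⟨k, by omega⟩ : Fin n) with htop
      set E : Finset V := (initClique e k).erase top with hEdef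
      have htopmem : top ∈ initClique e k := by
        rw [mem_initClique]
        simp only [htop, Equiv.apply_symm_apply]
        omega
      have hEcard : E.card = k := by
        rw [hEdef, Finset.card_erase_of_mem htopmem, initClique_card e hkn]; omega
      have hEsmall : ∀ z ∈ E, (e z : ℕ) < k + 1 := by
        intro z hz
        exact mem_initClique.mp (Finset.mem_of_mem_erase hz)
      have hbig : ∀ j : Fin n, k + 1 ≤ (j : ℕ) →
          ∀ i : Fin n, i < j → (G.Adj (e.symm i) (e.symm j) ↔ e.symm i ∈ E) := by
        intro j hj
        exfalso
        have := j.2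
        omega
      have hchar := char_of_uniform e hkn hbase E hEsmall hEcard hbig
      exact (iso_of_char G E hEcard hchar).some
    · -- n ≥ k + 2 : uniform attachment
      have hkn2 : k + 2 ≤ n := by omega
      have huni := uniform_or_config e hkn2 hbase C hCp hP
      set jk : Fin n := ⟨k + 1, by omega⟩ with hjk
      set E : Finset V := C jk with hEdef
      have hjkbig : k + 1 ≤ (jk : ℕ) := le_refl _
      obtain ⟨hEclique, hEidx, hEiff⟩ := hCp jk hjkbig
      have hEcard : E.card = k := hEclique.2
      have hjkv : (jk : ℕ) = k + 1 := rfl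
      have hEsmall : ∀ z ∈ E, (e z : ℕ) < k + 1 := by
        intro z hz
        have := hEidx z hz
        omega
      have hbig : ∀ j : Fin n, k + 1 ≤ (j : ℕ) →
          ∀ i : Fin n, i < j → (G.Adj (e.symm i) (e.symm j) ↔ e.symm i ∈ E) := by
        intro j hj i hij
        have := (hCp j hj).2.2 i hij
        rw [huni j hj] at this
        exact this
      have hchar := char_of_uniform e hkn hbase E hEsmall hEcard hbig
      exact (iso_of_char G E hEcard hchar).some
end TrivialDecomp
end
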